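/- arXiv:2605.11873 — 11 statements merged into one kernel-verified Lean document; each statement's English description precedes it below -/
import Mathlib

section
/- In a temporal k-path graph 𝒢 = ⊎_{i∈[k]} P_i, for any two vertices u and v such that u reaches v, there exists a temporal path from u to v that uses at most one contiguous segment from each base-path: for every i ∈ [k], the temporal edges of the path that belong to P_i form a contiguous subpath of P_i and occur consecutively along the path. -/
/-- A temporal edge of a directed temporal multigraph: a source, a destination,
and an integer time label. -/
structure TEdge (V : Type) where
  src : V
  dst : V
  lab : ℤ

/-- Two consecutive temporal edges form a valid step of a temporal path/walk:
the head of the first is the tail of the second, and labels strictly increase. -/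
def TemporalStep {V : Type} (e f : TEdge V) : Prop :=
  e.dst = f.src ∧ e.lab < f.lab

/-- A temporal path: a sequence of temporal edges forming a directed path with
strictly increasing labels. -/
def IsTemporalPath {V : Type} (p : List (TEdge V)) : Prop :=
  p.Chain' TemporalStep

/-- An annotated temporal walk in the temporal `k`-path graph `⊎ P`: each step
records the base-path its temporal edge comes from, edges form a directed walk
and labels strictly increase. -/
def IsAWalk {V : Type} {k : ℕ} (P : Fin k → List (TEdge V))
    (p : List (Fin k × TEdge V)) : Prop :=
  (∀ x ∈ p, x.2 ∈ P x.1) ∧ p.Chain' (fun x y => TemporalStep x.2 y.2)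

/-- `u` reaches `v` in the temporal `k`-path graph `⊎ P`. -/
def Reaches {V : Type} {k : ℕ} (P : Fin k → List (TEdge V)) (u v : V) : Prop :=
  u = v ∨ ∃ p : List (Fin k × TEdge V), p ≠ [] ∧ IsAWalk P p ∧
    (p.head?.map fun x => x.2.src) = some u ∧
    (p.getLast?.map fun x => x.2.dst) = some v


/-- Labels strictly increase along a temporal chain, pairwise. -/
lemma lab_pairwise {α : Type*} {S : α → α → Prop} {g : α → ℤ}
    (hS : ∀ a b, S a b → g a < g b) {l : List α} (h : l.Chain' S) :
    l.Pairwise (fun a b => g a < g b) := by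
  haveI : IsTrans α (fun a b => g a < g b) := ⟨fun a b c h1 h2 => h1.trans h2⟩
  exact List.isChain_iff_pairwise.mp (h.imp hS)

/-- Spanning infix of a temporal path between two of its edges. -/
lemma infixSpan {V : Type} {l : List (TEdge V)} (hl : l.Chain' TemporalStep)
    {e f : TEdge V} (he : e ∈ l) (hf : f ∈ l) (hle : e.lab ≤ f.lab) :
    ∃ s : List (TEdge V), s <:+: l ∧ s.head? = some e ∧ s.getLast? = some f := by
  obtain ⟨a, ha, hae⟩ := List.mem_iff_getElem.mp he
  obtain ⟨b, hb, hbf⟩ := List.mem_iff_getElem.mp hf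
  have hpw : l.Pairwise (fun a b => a.lab < b.lab) :=
    lab_pairwise (fun a b h => h.2) hl
  have hab : a ≤ b := by
    by_contra hba
    have : l[b].lab < l[a].lab :=
      List.pairwise_iff_getElem.mp hpw b a hb ha (Nat.lt_of_not_le hba)
    rw [hae, hbf] at this; omega
  refine ⟨(l.take (b+1)).drop a, ?_, ?_, ?_⟩
  · exact (List.drop_suffix a _).isInfix.trans (List.take_prefix (b+1) l).isInfix
  · have hlen : a < ((l.take (b+1))).length := by
      simp [List.length_take]; omega
    rw [List.head?_eq_getElem?]
    rw [List.getElem?_eq_getElem (by simpa using hlen)]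
    simp only [List.getElem_drop, List.getElem_take, Nat.add_zero]
    rw [hae]
  · have hslen : ((l.take (b+1)).drop a).length = b + 1 - a := by
      simp [List.length_take, List.length_drop]; omega
    rw [List.getLast?_eq_getElem?, hslen]
    have hidx : b + 1 - a - 1 < ((l.take (b+1)).drop a).length := by omega
    rw [List.getElem?_eq_getElem hidx]
    simp only [List.getElem_drop, List.getElem_take]
    have : a + (b + 1 - a - 1) = b := by omega
    simp_rw [this]  -- may need congr
    rw [hbf]

/-- Last occurrence split. -/
lemma last_occ {α β : Type*} (i : α) :
    ∀ l : List (α × β), i ∈ l.map Prod.fst →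
      ∃ l1 f l2, l = l1 ++ (i, f) :: l2 ∧ i ∉ l2.map Prod.fst := by
  intro l
  induction l with
  | nil => simp
  | cons x xs ih =>
    intro h
    by_cases hx : i ∈ xs.map Prod.fst
    · obtain ⟨l1, f, l2, h1, h2⟩ := ih hx
      exact ⟨x :: l1, f, l2, by rw [h1]; rfl, h2⟩
    · have : x.1 = i := by
        simp only [List.map_cons, List.mem_cons] at h
        tauto
      exact ⟨[], x.2, xs, by rw [← this]; rfl, hx⟩

/-- Main induction: any annotated walk can be reorganized into one with the same
endpoints that decomposes into segments from pairwise distinct base-paths. -/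
lemma main_lemma {V : Type} {k : ℕ} (P : Fin k → List (TEdge V))
    (hP : ∀ i, IsTemporalPath (P i)) :
    ∀ n (p : List (Fin k × TEdge V)), (p.map Prod.fst).toFinset.card ≤ n →
      IsAWalk P p →
      ∃ (p' : List (Fin k × TEdge V)) (L : List (Fin k × List (TEdge V))), IsAWalk P p' ∧ p'.head? = p.head? ∧
        (p'.getLast?.map fun x => x.2.dst) = (p.getLast?.map fun x => x.2.dst) ∧
        (L.map Prod.fst).Nodup ∧
        p' = (L.map (fun x => x.2.map (fun e => (x.1, e)))).flatten ∧
        (∀ x ∈ L, x.2 <:+: P x.1) ∧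
        (∀ x ∈ L, x.1 ∈ p.map Prod.fst) := by
  intro n
  induction n with
  | zero =>
    intro p hcard hw
    have hp : p = [] := by
      cases p with
      | nil => rfl
      | cons x xs =>
        exfalso
        have : x.1 ∈ (((x :: xs).map Prod.fst).toFinset) := by simp
        have := Finset.card_pos.mpr ⟨x.1, this⟩
        omega
    subst hp
    exact ⟨[], [], ⟨by simp, List.isChain_nil⟩, rfl, rfl, by simp, rfl, by simp, by simp⟩
  | succ m ih =>
    intro p hcard hw
    cases hp : p with
    | nil =>
      exact ⟨[], [], ⟨by simp, List.isChain_nil⟩, rfl, rfl, by simp, rfl, by simp, by simp⟩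
    | cons x t =>
      subst hp
      obtain ⟨i, e⟩ := x
      -- last occurrence of i
      have hiocc : i ∈ ((i, e) :: t).map Prod.fst := by simp
      obtain ⟨p1, f, p2, hsplit, hino⟩ := last_occ i _ hiocc
      have hchain : ((i, e) :: t).Chain' (fun x y => TemporalStep x.2 y.2) := hw.2
      -- e.lab ≤ f.lab
      have hpw : ((i, e) :: t).Pairwise (fun a b => a.2.lab < b.2.lab) :=
        lab_pairwise (fun a b h => h.2) hchain
      have hef : e.lab ≤ f.lab := by
        cases p1 with
        | nil =>
          have hef' : e = f := by
            have h0 := hsplit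
            simp only [List.nil_append, List.cons.injEq, Prod.mk.injEq] at h0
            exact h0.1.2
          rw [hef']
        | cons y p1' =>
          have hy : y = (i, e) := by
            have := hsplit
            simp at this
            exact this.1.symm
          have hmem : (i, f) ∈ t := by
            have := hsplit
            rw [hy] at this
            simp at this
            rw [this]
            simp
          have := (List.pairwise_cons.mp hpw).1 (i, f) hmem
          exact le_of_lt this
      -- memberships
      have hmemE : e ∈ P i := hw.1 (i, e) (by simp)
      have hmemF : f ∈ P i := hw.1 (i, f) (by rw [hsplit]; simp)
      obtain ⟨s, hsInf, hsHead, hsLast⟩ := infixSpan (hP i) hmemE hmemF hef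
      have hsChain : s.Chain' TemporalStep := (hP i).infix hsInf
      have hsne : s ≠ [] := by
        intro h; rw [h] at hsHead; simp at hsHead
      -- p2 is a walk
      have hp2mem : ∀ x ∈ p2, x.2 ∈ P x.1 := fun x hx =>
        hw.1 x (by rw [hsplit]; simp [hx])
      have hp2chain : p2.Chain' (fun x y => TemporalStep x.2 y.2) := by
        refine hchain.suffix ?_
        rw [hsplit]
        exact ⟨p1 ++ [(i, f)], by simp⟩
      -- cardinality decrease
      have hsub : (p2.map Prod.fst).toFinset ⊆ (((i,e) :: t).map Prod.fst).toFinset := by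
        intro j hj
        simp only [List.mem_toFinset] at hj ⊢
        rw [hsplit]; simp [hj]
      have hssub : (p2.map Prod.fst).toFinset ⊂ (((i,e) :: t).map Prod.fst).toFinset := by
        refine ⟨hsub, fun hsub' => ?_⟩
        have : i ∈ (p2.map Prod.fst).toFinset := hsub' (by simp)
        rw [List.mem_toFinset] at this
        exact hino this
      have hcard2 : (p2.map Prod.fst).toFinset.card ≤ m := by
        have := Finset.card_lt_card hssub
        omega
      obtain ⟨p2', L2, hw2, hh2, hl2, hnd2, hfl2, hinf2, hidx2⟩ :=
        ih p2 hcard2 ⟨hp2mem, hp2chain⟩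
      -- construct
      refine ⟨s.map (fun g => (i, g)) ++ p2', (i, s) :: L2, ?_, ?_, ?_, ?_, ?_, ?_, ?_⟩
      · constructor
        · intro x hx
          rcases List.mem_append.mp hx with hx | hx
          · obtain ⟨g, hg, rfl⟩ := List.mem_map.mp hx
            exact hsInf.subset hg
          · exact hw2.1 x hx
        · rw [List.Chain', List.isChain_append]
          refine ⟨?_, hw2.2, ?_⟩
          · rw [List.isChain_map]
            exact hsChain
          · intro x hx y hy
            rw [List.getLast?_map] at hx
            rw [hsLast] at hx
            simp only [Option.map_some, Option.mem_def, Option.some.injEq] at hx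
            subst hx
            rw [hh2] at hy
            -- step from (i,f) to head of p2 in original chain
            have hsplit' : (i, e) :: t = (p1 ++ [(i, f)]) ++ p2 := by
              rw [hsplit]; simp
            have hc := hchain
            rw [hsplit', List.Chain', List.isChain_append] at hc
            refine hc.2.2 (i, f) ?_ y hy
            rw [List.getLast?_append]; simp

      · rw [List.head?_append]
        rw [List.head?_map, hsHead]
        have he' : ((i, e) :: t).head? = some (i, e) := rfl
        simp [he']
      · cases hp2 : p2 with
        | nil =>
          have hp2' : p2' = [] := by
            rw [hp2] at hl2
            simpa using hl2
          rw [hp2']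
          simp only [List.append_nil]
          rw [List.getLast?_map, hsLast]
          have hsplit' : (i, e) :: t = (p1 ++ [(i, f)]) ++ p2 := by
            rw [hsplit]; simp
          rw [hsplit', hp2, List.append_nil, List.getLast?_append]
          simp
        | cons z zs =>
          have hp2'ne : p2' ≠ [] := by
            intro h
            rw [h, hp2] at hh2
            simp at hh2
          obtain ⟨w, hwl⟩ : ∃ w, p2'.getLast? = some w := by
            cases h : p2'.getLast? with
            | none => exact absurd (List.getLast?_eq_none_iff.mp h) hp2'ne
            | some w => exact ⟨w, rfl⟩
          obtain ⟨w2, hwl2⟩ : ∃ w2, p2.getLast? = some w2 := by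
            cases h : p2.getLast? with
            | none =>
              exact absurd (List.getLast?_eq_none_iff.mp h) (by rw [hp2]; simp)
            | some w2 => exact ⟨w2, rfl⟩
          have hsplit' : (i, e) :: t = (p1 ++ [(i, f)]) ++ p2 := by
            rw [hsplit]; simp
          have hR : ((i, e) :: t).getLast? = some w2 := by
            rw [hsplit', List.getLast?_append, hwl2]; rfl
          have hL : (s.map (fun g => (i, g)) ++ p2').getLast? = some w := by
            rw [List.getLast?_append, hwl]; rfl
          rw [hL, hR]
          rw [hwl, hwl2] at hl2
          exact hl2
      · simp only [List.map_cons, List.nodup_cons]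
        refine ⟨?_, hnd2⟩
        intro hi
        obtain ⟨x, hx, hx1⟩ := List.mem_map.mp hi
        have := hidx2 x hx
        rw [hx1] at this
        exact hino this
      · simp only [List.map_cons, List.flatten_cons]
        rw [hfl2]
      · intro x hx
        rcases List.mem_cons.mp hx with rfl | hx
        · exact hsInf
        · exact hinf2 x hx
      · intro x hx
        rcases List.mem_cons.mp hx with rfl | hx
        · simp
        · have h2 := hidx2 x hx
          rw [hsplit]
          simp only [List.map_append, List.mem_append, List.map_cons, List.mem_cons]
          tauto

/-- In a temporal `k`-path graph, whenever `u` reaches `v` there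
is a temporal path (walk) from `u` to `v` that uses at most one contiguous
segment from each base-path: the walk decomposes as a concatenation of segments,
each an infix of its base-path, with pairwise distinct base-paths, so the edges
belonging to each base-path form a contiguous subpath of that base-path and occur
consecutively along the walk. -/
theorem stmt0 {V : Type} {k : ℕ} (P : Fin k → List (TEdge V))
    (hP : ∀ i, IsTemporalPath (P i)) (u v : V) (h : Reaches P u v) :
    ∃ p : List (Fin k × TEdge V),
      IsAWalk P p ∧
      (if p.isEmpty then u = v
        else (p.head?.map fun x => x.2.src) = some u ∧
          (p.getLast?.map fun x => x.2.dst) = some v) ∧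
      ∃ L : List (Fin k × List (TEdge V)),
        (L.map Prod.fst).Nodup ∧
        p = (L.map (fun x => x.2.map (fun e => (x.1, e)))).flatten ∧
        ∀ x ∈ L, x.2 <:+: P x.1 := by
  rcases h with rfl | ⟨p, hpne, hwalk, hhead, hlast⟩
  · exact ⟨[], ⟨by simp, List.isChain_nil⟩, by simp, ⟨[], by simp, rfl, by simp⟩⟩
  · obtain ⟨p', L, hw', hh', hl', hnd, hfl, hinf, -⟩ :=
      main_lemma P hP ((p.map Prod.fst).toFinset.card) p le_rfl hwalk
    have hp'ne : p' ≠ [] := by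
      intro h0
      rw [h0] at hh'
      cases p with
      | nil => exact hpne rfl
      | cons a t => simp at hh'
    refine ⟨p', hw', ?_, L, hnd, hfl, hinf⟩
    rw [if_neg (by simpa [List.isEmpty_iff] using hp'ne)]
    constructor
    · rw [hh']; exact hhead
    · rw [hl']; exact hlast
end

section
/- Let 𝒢 = ⊎𝒫 be a temporal k-path graph with a vertex s and a base-path P_i ∈ 𝒫, and let Q and Q' be temporal paths in 𝒢 both starting at s such that the edge of Q leaving a vertex u is the temporal edge of P_i leaving u, the edge of Q' leaving a vertex v is the temporal edge of P_i leaving v, and u ≤_{P_i} v. Then the concatenation of the prefix of Q ending at u, the segment P_i[u:v], and the suffix of Q' starting at v is a sequence of temporal edges with strictly increasing labels forming a directed walk from s to the last vertex of Q'; in particular, s reaches the last vertex of Q'. -/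
/-- If two temporal paths `Q`, `Q'` of the `k`-path graph `⊎ P`
both start at `s`, `Q` leaves a vertex `u` along base-path `P i` with the edge
`e`, `Q'` leaves a vertex `v` along `P i` with the edge `f`, and `u ≤_{P i} v`
(witnessed by the decomposition `P i = A ++ S ++ f :: B` where the segment
`S ++ [f]` of `P i` from `u` starts with `e`), then the concatenation of the
prefix of `Q` ending at `u`, the segment `P i [u:v]`, and the suffix of `Q'`
starting at `v` is a temporal walk (strictly increasing labels, consecutive
edges sharing endpoints) from `s` to the last vertex `z` of `Q'`; in particular
`s` reaches `z`. -/
theorem stmt1 {V : Type} {k : ℕ} (P : Fin k → List (TEdge V))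
    (hP : ∀ i, IsTemporalPath (P i)) (i : Fin k) (s u v z : V)
    (Q q1 q2 Q' q1' q2' : List (Fin k × TEdge V)) (e f : TEdge V)
    (A S B : List (TEdge V))
    (hQ : IsAWalk P Q) (hQ' : IsAWalk P Q')
    (hQs : (Q.head?.map fun x => x.2.src) = some s)
    (hQ's : (Q'.head?.map fun x => x.2.src) = some s)
    (hQdec : Q = q1 ++ (i, e) :: q2)
    (hQ'dec : Q' = q1' ++ (i, f) :: q2')
    (hu : e.src = u) (hv : f.src = v)
    (hPdec : P i = A ++ S ++ f :: B)
    (hseg : (S ++ [f]).head? = some e)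
    (hz : (Q'.getLast?.map fun x => x.2.dst) = some z) :
    IsAWalk P (q1 ++ S.map (fun e' => (i, e')) ++ (i, f) :: q2') ∧
    ((q1 ++ S.map (fun e' => (i, e')) ++ (i, f) :: q2').head?.map
      fun x => x.2.src) = some s ∧
    ((q1 ++ S.map (fun e' => (i, e')) ++ (i, f) :: q2').getLast?.map
      fun x => x.2.dst) = some z ∧
    Reaches P s z := by
    classical
  set g : TEdge V → Fin k × TEdge V := fun e' => (i, e') with hg
  set R : Fin k × TEdge V → Fin k × TEdge V → Prop := fun x y => TemporalStep x.2 y.2 with hR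
  -- rewrite the target list
  have hlist : q1 ++ S.map g ++ (i, f) :: q2' = q1 ++ ((S ++ [f]).map g ++ q2') := by
    simp [g, List.append_assoc]
  -- chain of S ++ [f]
  have hSf : (S ++ [f]).Chain' TemporalStep := by
    have := hP i
    rw [IsTemporalPath, hPdec] at this
    refine this.infix ?_
    exact ⟨A, B, by simp [List.append_assoc]⟩
  -- facts from Q
  obtain ⟨hQmem, hQch⟩ := hQ
  rw [hQdec, List.Chain', List.isChain_append] at hQch
  obtain ⟨hq1ch, -, hjump1⟩ := hQch
  -- facts from Q'
  obtain ⟨hQ'mem, hQ'ch⟩ := hQ'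
  rw [hQ'dec, List.Chain', List.isChain_append] at hQ'ch
  obtain ⟨-, hfq2'ch, -⟩ := hQ'ch
  rw [List.isChain_cons] at hfq2'ch
  obtain ⟨hjump2, hq2'ch⟩ := hfq2'ch
  -- head of the mapped segment
  have hmaphead : ((S ++ [f]).map g).head? = some (i, e) := by
    rw [List.head?_map, hseg]; rfl
  have hThead : ((S ++ [f]).map g ++ q2').head? = some (i, e) := by
    rw [List.head?_append_of_ne_nil]
    · exact hmaphead
    · simp
  -- chain of middle ++ tail
  have hTch : ((S ++ [f]).map g ++ q2').Chain' R := by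
    rw [List.Chain', List.isChain_append]
    refine ⟨?_, hq2'ch, ?_⟩
    · rw [List.isChain_map]
      exact hSf
    · intro x hx y hy
      have hlf : (S ++ [f]).getLast? = some f := by simp
      simp only [List.getLast?_map, hlf, Option.map_some, Option.mem_def,
        Option.some_inj] at hx
      subst hx
      exact hjump2 y hy
  have hWch : (q1 ++ ((S ++ [f]).map g ++ q2')).Chain' R := by
    rw [List.Chain', List.isChain_append]
    refine ⟨hq1ch, hTch, ?_⟩
    intro x hx y hy
    rw [hThead] at hy
    simp only [Option.mem_def, Option.some_inj] at hy
    subst hy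
    exact hjump1 x hx (i, e) (by simp)
  have hWmem : ∀ x ∈ q1 ++ ((S ++ [f]).map g ++ q2'), x.2 ∈ P x.1 := by
    intro x hx
    simp only [List.mem_append, List.mem_map] at hx
    rcases hx with hx | ⟨a, ha, rfl⟩ | hx
    · exact hQmem x (by rw [hQdec]; exact List.mem_append_left _ hx)
    · show a ∈ P i
      rw [hPdec]
      rcases ha with ha | ha
      · simp [ha]
      · simp at ha; simp [ha]
    · exact hQ'mem x (by rw [hQ'dec]; exact List.mem_append_right _ (List.mem_cons_of_mem _ hx))
  have hWalk : IsAWalk P (q1 ++ S.map g ++ (i, f) :: q2') := by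
    rw [hlist]; exact ⟨hWmem, hWch⟩
  -- head
  have hWhead : ((q1 ++ S.map g ++ (i, f) :: q2').head?.map fun x => x.2.src) = some s := by
    rw [hlist]
    cases q1 with
    | nil =>
      rw [List.nil_append, hThead]
      rw [hQdec, List.nil_append] at hQs
      simpa using hQs
    | cons a t =>
      rw [hQdec] at hQs
      simpa using hQs
  -- last
  have hWlast : ((q1 ++ S.map g ++ (i, f) :: q2').getLast?.map fun x => x.2.dst) = some z := by
    have h1 : (q1 ++ S.map g ++ (i, f) :: q2').getLast? = ((i, f) :: q2').getLast? :=
      List.getLast?_append_of_ne_nil _ (by simp)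
    have h2 : Q'.getLast? = ((i, f) :: q2').getLast? := by
      rw [hQ'dec]; exact List.getLast?_append_of_ne_nil _ (by simp)
    rw [h1]
    rw [h2] at hz
    exact hz
  refine ⟨hWalk, hWhead, hWlast, Or.inr ⟨_, ?_, hWalk, hWhead, hWlast⟩⟩
  simp
end

section
/- Let 𝒢 = ⊎𝒫 be a temporal k-path graph with source s on a distinguished base-path P_s, and let 𝒱 be a switch-vertex-set that is temporal in 𝒢 and whose tree T_𝒱 spans all of 𝒫. Then R^𝒢_𝒱(s) = ⋃_{P ∈ 𝒫} {vertices of the suffix P[switchonto(P):]}, where by convention switchonto(P_s) = s. -/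
/-- The list of vertices visited by a list of temporal edges, in order. -/
def verts {V : Type} (p : List (TEdge V)) : List V :=
  p.map TEdge.src ++ (p.getLast?.map TEdge.dst).toList

/-- `v` occurs on `p` at or before `w`. -/
def le_on {V : Type} (p : List (TEdge V)) (v w : V) : Prop :=
  ∃ m n : ℕ, m ≤ n ∧ (verts p)[m]? = some v ∧ (verts p)[n]? = some w

/-- `v` occurs on `p` strictly before `w`. -/
def lt_on {V : Type} (p : List (TEdge V)) (v w : V) : Prop :=
  ∃ m n : ℕ, m < n ∧ (verts p)[m]? = some v ∧ (verts p)[n]? = some w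

/-- The edge relation of the switch tree `T_𝒱` on the base-path indices. -/
def svsEdge {V : Type} {k : ℕ} (𝒱 : Set (V × Fin k × Fin k)) (a b : Fin k) : Prop :=
  ∃ v, (v, a, b) ∈ 𝒱

/-- A switch-vertex-set (SVS) for the `k`-path graph `⊎ P` with source base-path
index `sIdx`: a set of switches `(v, P_from, P_to)` such that (i) `P_from` has an
edge into `v` and `P_to` has an edge out of `v`; (ii) at most one switch onto each
base-path and none onto the source base-path; (iii) each switch off a base-path
occurs strictly after the switch onto it; (iv) the switches form a directed tree
rooted at the source base-path. -/
structure IsSVS {V : Type} {k : ℕ} (P : Fin k → List (TEdge V)) (sIdx : Fin k)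
    (𝒱 : Set (V × Fin k × Fin k)) : Prop where
  switch_exists : ∀ ⦃v : V⦄ ⦃a b : Fin k⦄, (v, a, b) ∈ 𝒱 →
    (∃ e ∈ P a, e.dst = v) ∧ ∃ e ∈ P b, e.src = v
  unique_onto : ∀ ⦃v v' : V⦄ ⦃a a' b : Fin k⦄,
    (v, a, b) ∈ 𝒱 → (v', a', b) ∈ 𝒱 → v = v' ∧ a = a'
  no_onto_source : ∀ ⦃v : V⦄ ⦃a : Fin k⦄, (v, a, sIdx) ∉ 𝒱
  onto_before_off : ∀ ⦃v : V⦄ ⦃a b : Fin k⦄, (v, a, b) ∈ 𝒱 →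
    ∀ ⦃v' : V⦄ ⦃c : Fin k⦄, (v', b, c) ∈ 𝒱 → lt_on (P b) v v'
  tree : ∀ ⦃v : V⦄ ⦃a b : Fin k⦄, (v, a, b) ∈ 𝒱 →
    Relation.ReflTransGen (svsEdge 𝒱) sIdx a

/-- The switch `(v, a, b)` is temporal in `⊎ P`: the edge of `P a` entering `v`
has a smaller label than the edge of `P b` leaving `v`. -/
def TemporalSwitch {V : Type} {k : ℕ} (P : Fin k → List (TEdge V))
    (v : V) (a b : Fin k) : Prop :=
  ∀ e ∈ P a, e.dst = v → ∀ f ∈ P b, f.src = v → e.lab < f.lab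

/-- One step of a `𝒱`-respecting walk: if two consecutive edges come from
different base-paths, the corresponding switch belongs to `𝒱`. -/
def RespStep {V : Type} {k : ℕ} (𝒱 : Set (V × Fin k × Fin k))
    (x y : Fin k × TEdge V) : Prop :=
  x.1 ≠ y.1 → (x.2.dst, x.1, y.1) ∈ 𝒱

/-- `u` reaches `v` in `⊎ P` by a `𝒱`-respecting temporal walk. -/
def ReachesResp {V : Type} {k : ℕ} (P : Fin k → List (TEdge V))
    (𝒱 : Set (V × Fin k × Fin k)) (u v : V) : Prop :=
  u = v ∨ ∃ p : List (Fin k × TEdge V), p ≠ [] ∧ IsAWalk P p ∧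
    p.Chain' (RespStep 𝒱) ∧
    (p.head?.map fun x => x.2.src) = some u ∧
    (p.getLast?.map fun x => x.2.dst) = some v


section Stmt2Aux

variable {V : Type} {k : ℕ}

lemma getElem?_inj' {l : List V} (h : l.Nodup) {m n : ℕ} {x : V}
    (hm : l[m]? = some x) (hn : l[n]? = some x) : m = n := by
  have hml : m < l.length := by
    by_contra hc
    simp [List.getElem?_eq_none (le_of_not_gt hc)] at hm
  exact (List.getElem?_inj hml h).mp (hm.trans hn.symm)

lemma verts_getElem_src {p : List (TEdge V)} {n : ℕ} (hn : n < p.length) :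
    (verts p)[n]? = some p[n].src := by
  unfold verts
  rw [List.getElem?_append]
  simp [hn, List.getElem?_eq_getElem hn]

lemma verts_bound {p : List (TEdge V)} {n : ℕ} {x : V}
    (h : (verts p)[n]? = some x) : n ≤ p.length := by
  have h1 : n < (verts p).length := by
    by_contra hc
    simp [List.getElem?_eq_none (le_of_not_gt hc)] at h
  have h2 : (verts p).length ≤ p.length + 1 := by
    unfold verts
    rw [List.length_append, List.length_map]
    have : (Option.map TEdge.dst p.getLast?).toList.length ≤ 1 := by
      cases p.getLast? <;> simp
    omega
  omega

lemma chain'_adj {α : Type*} {R : α → α → Prop} {l : List α} (h : l.Chain' R)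
    {n : ℕ} {a b : α} (ha : l[n]? = some a) (hb : l[n+1]? = some b) : R a b := by
  have hn1 : n + 1 < l.length := by
    by_contra hc
    simp [List.getElem?_eq_none (le_of_not_gt hc)] at hb
  have hR := List.isChain_iff_getElem.mp h n (by omega)
  rw [List.getElem?_eq_getElem (by omega : n < l.length), Option.some_inj] at ha
  rw [List.getElem?_eq_getElem hn1, Option.some_inj] at hb
  rw [← ha, ← hb]
  exact hR

lemma verts_getElem_dst {p : List (TEdge V)} (hc : p.Chain' TemporalStep)
    {n : ℕ} (hn : n < p.length) : (verts p)[n+1]? = some p[n].dst := by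
  rcases lt_or_eq_of_le (Nat.succ_le_of_lt hn) with h | h
  · rw [verts_getElem_src h]
    have hR := chain'_adj hc (List.getElem?_eq_getElem hn)
      (List.getElem?_eq_getElem h)
    rw [hR.1]
  · unfold verts
    rw [List.getElem?_append]
    have h1 : ¬ (n + 1 < (p.map TEdge.src).length) := by
      rw [List.length_map]; omega
    rw [if_neg h1]
    have h2 : n + 1 - (p.map TEdge.src).length = 0 := by
      rw [List.length_map]; omega
    rw [h2]
    have hl : p.getLast? = some p[n] := by
      rw [List.getLast?_eq_getElem?]
      have : p.length - 1 = n := by omega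
      rw [this, List.getElem?_eq_getElem hn]
    rw [hl]
    simp

/-- Anchor condition: vertex at position `m` of `P c` is either the source
(when `c = sIdx`, `m = 0`) or a switch vertex onto `c`. -/
abbrev AnchorAt (P : Fin k → List (TEdge V)) (sIdx : Fin k)
    (𝒱 : Set (V × Fin k × Fin k)) (c : Fin k) (m : ℕ) : Prop :=
  (c = sIdx ∧ m = 0) ∨ ∃ v b, (v, b, c) ∈ 𝒱 ∧ (verts (P c))[m]? = some v

/-- There is a suitable `𝒱`-respecting walk from `s` to the vertex at position
`n` of base-path `P i`, ready to be extended along `P i`. -/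
abbrev WTo (P : Fin k → List (TEdge V)) (𝒱 : Set (V × Fin k × Fin k))
    (sIdx : Fin k) (s : V) (i : Fin k) (n : ℕ) : Prop :=
  (i = sIdx ∧ n = 0) ∨
  ∃ (p : List (Fin k × TEdge V)) (j : Fin k) (e : TEdge V), IsAWalk P p ∧ p.Chain' (RespStep 𝒱) ∧
    (p.head?.map fun x => x.2.src) = some s ∧
    p.getLast? = some (j, e) ∧
    (verts (P i))[n]? = some e.dst ∧
    ((j = i ∧ (P i)[n-1]? = some e ∧ n ≠ 0) ∨ (e.dst, j, i) ∈ 𝒱) ∧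
    (∀ f, (P i)[n]? = some f → e.lab < f.lab)

/-- The anchored-suffix condition used in the forward direction. -/
abbrev AnchP (P : Fin k → List (TEdge V)) (sIdx : Fin k)
    (𝒱 : Set (V × Fin k × Fin k)) (s : V) (i : Fin k) (u : V) : Prop :=
  (i = sIdx ∧ le_on (P sIdx) s u) ∨ ∃ v a, (v, a, i) ∈ 𝒱 ∧ le_on (P i) v u

end Stmt2Aux


/-- If `𝒱` is a switch-vertex-set that is temporal in the
temporal `k`-path graph `⊎ P`, whose tree spans all base-paths, and the source
`s` is the first vertex of its (unique) base-path `P sIdx`, then the set of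
vertices reachable from `s` by `𝒱`-respecting temporal walks is exactly the
union of the suffixes of the base-paths starting at their respective switch
vertices (with the convention `switchonto (P sIdx) = s`). -/


theorem stmt2 {V : Type} {k : ℕ} (P : Fin k → List (TEdge V))
    (hP : ∀ i, IsTemporalPath (P i)) (hnd : ∀ i, (verts (P i)).Nodup)
    (sIdx : Fin k) (s : V)
    (hfirst : (verts (P sIdx)).head? = some s)
    (honly : ∀ i, s ∈ verts (P i) → i = sIdx)
    (𝒱 : Set (V × Fin k × Fin k)) (hSVS : IsSVS P sIdx 𝒱)
    (htmp : ∀ sw ∈ 𝒱, TemporalSwitch P sw.1 sw.2.1 sw.2.2)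
    (hspan : ∀ i : Fin k, Relation.ReflTransGen (svsEdge 𝒱) sIdx i) :
    {w | ReachesResp P 𝒱 s w} =
      {w | le_on (P sIdx) s w} ∪
        {w | ∃ v a b, (v, a, b) ∈ 𝒱 ∧ le_on (P b) v w} := by
  classical
  -- conversion from WTo to ReachesResp
  have wto_reach : ∀ (i : Fin k) (n : ℕ) (w : V), WTo P 𝒱 sIdx s i n →
      (verts (P i))[n]? = some w → ReachesResp P 𝒱 s w := by
    rintro i n w (⟨rfl, rfl⟩ | ⟨p, j, e, hw, hresp, hhead, hlast, hdst, _, _⟩) hvw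
    · left
      rw [← List.head?_eq_getElem?, hfirst] at hvw
      exact Option.some_inj.mp hvw
    · right
      refine ⟨p, ?_, hw, hresp, hhead, ?_⟩
      · intro h; rw [h] at hlast; simp at hlast
      · have hew : e.dst = w := Option.some_inj.mp (hdst.symm.trans hvw)
        rw [hlast, Option.map_some, hew]
  -- extending a walk by one edge along its current base-path
  have ext1 : ∀ (i : Fin k) (n : ℕ), n < (P i).length →
      WTo P 𝒱 sIdx s i n → WTo P 𝒱 sIdx s i (n + 1) := by
    rintro i n hn (⟨hi, rfl⟩ | ⟨p, j, e, ⟨hwmem, hwch⟩, hresp, hhead, hlast, hdst, hcanon, hlab⟩)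
    · -- start with a single edge walk
      subst hi
      right
      have h0 : (P i)[0]? = some ((P i)[0]'hn) := List.getElem?_eq_getElem hn
      refine ⟨[(i, (P i)[0]'hn)], i, (P i)[0]'hn,
        ⟨?_, List.isChain_singleton _⟩, List.isChain_singleton _, ?_, by simp, ?_, ?_, ?_⟩
      · intro x hx
        simp at hx
        rw [hx]
        exact List.getElem_mem hn
      · simp only [List.head?_cons, Option.map_some]
        have h1 : (verts (P i))[0]? = some ((P i)[0]'hn).src := verts_getElem_src hn
        rw [← List.head?_eq_getElem?, hfirst] at h1
        rw [← Option.some_inj.mp h1]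
      · exact verts_getElem_dst (hP i) hn
      · exact Or.inl ⟨rfl, h0, by simp⟩
      · intro f hf
        exact (chain'_adj (hP i) h0 hf).2
    · -- extend the existing walk
      right
      have hf? : (P i)[n]? = some ((P i)[n]'hn) := List.getElem?_eq_getElem hn
      have hsrc : e.dst = ((P i)[n]'hn).src := by
        have h1 : (verts (P i))[n]? = some ((P i)[n]'hn).src := verts_getElem_src hn
        exact Option.some_inj.mp (hdst.symm.trans h1)
      have hstep : TemporalStep e ((P i)[n]'hn) := ⟨hsrc, hlab _ hf?⟩
      obtain ⟨x₀, hx₀⟩ : ∃ x₀, p.head? = some x₀ := by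
        cases h : p.head? with
        | none => rw [h] at hhead; simp at hhead
        | some x => exact ⟨x, rfl⟩
      refine ⟨p ++ [(i, (P i)[n]'hn)], i, (P i)[n]'hn, ⟨?_, ?_⟩, ?_, ?_, ?_, ?_, ?_, ?_⟩
      · intro x hx
        rcases List.mem_append.mp hx with h | h
        · exact hwmem x h
        · simp at h
          rw [h]
          exact List.getElem_mem hn
      · rw [List.Chain', List.isChain_append]
        refine ⟨hwch, by simp, ?_⟩
        intro x hx y hy
        simp at hy
        rw [hlast] at hx
        simp at hx
        rw [← hx, ← hy]
        exact hstep
      · rw [List.Chain', List.isChain_append]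
        refine ⟨hresp, by simp, ?_⟩
        intro x hx y hy
        simp at hy
        rw [hlast] at hx
        simp at hx
        rw [← hx, ← hy]
        intro hne
        rcases hcanon with ⟨hji, _⟩ | hv
        · exact absurd hji hne
        · exact hv
      · have hh : (p ++ [(i, (P i)[n]'hn)]).head? = some x₀ := by
          rw [List.head?_append, hx₀]; rfl
        rw [hh]
        rw [hx₀] at hhead
        exact hhead
      · exact List.getLast?_concat
      · exact verts_getElem_dst (hP i) hn
      · exact Or.inl ⟨rfl, hf?, by simp⟩
      · intro g hg
        exact (chain'_adj (hP i) hf? hg).2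
  -- iterating ext1
  have ext_many : ∀ (i : Fin k) (m n : ℕ), m ≤ n → n ≤ (P i).length →
      WTo P 𝒱 sIdx s i m → WTo P 𝒱 sIdx s i n := by
    intro i m n hmn hn h
    obtain ⟨d, rfl⟩ : ∃ d, n = m + d := ⟨n - m, by omega⟩
    clear hmn
    induction d with
    | zero => exact h
    | succ d ih =>
        have h1 : WTo P 𝒱 sIdx s i (m + d) := ih (by omega)
        exact ext1 i (m + d) (by omega) h1
  -- switching from one base-path onto another at a switch vertex
  have switch_step : ∀ (v : V) (b c : Fin k), (v, b, c) ∈ 𝒱 →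
      ∀ mb, (verts (P b))[mb]? = some v → WTo P 𝒱 sIdx s b mb →
      ∀ mc, (verts (P c))[mc]? = some v → WTo P 𝒱 sIdx s c mc := by
    intro v b c hvbc mb hmb hW mc hmc
    rcases hW with ⟨hbs, rfl⟩ | ⟨p, j, e, hw, hresp, hhead, hlast, hdst, hcanon, hlab⟩
    · exfalso
      subst hbs
      obtain ⟨⟨e, he, hedst⟩, -⟩ := hSVS.switch_exists hvbc
      obtain ⟨q, hq, hqe⟩ := List.getElem_of_mem he
      have h1 : (verts (P b))[q + 1]? = some v := by
        rw [verts_getElem_dst (hP b) hq, hqe, hedst]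
      exact Nat.succ_ne_zero q (getElem?_inj' (hnd b) h1 hmb)
    · have hedst : e.dst = v := Option.some_inj.mp (hdst.symm.trans hmb)
      rcases hcanon with ⟨rfl, hpe, hmb0⟩ | hanch
      · right
        refine ⟨p, j, e, hw, hresp, hhead, hlast, by rw [hedst]; exact hmc,
          Or.inr (by rw [hedst]; exact hvbc), ?_⟩
        intro f hf
        have hmcl : mc < (P c).length := by
          by_contra hcon
          simp [List.getElem?_eq_none (le_of_not_gt hcon)] at hf
        have hfmem : f ∈ P c := List.mem_of_getElem? hf
        have hfsrc : f.src = v := by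
          have h1 : (verts (P c))[mc]? = some (((P c)[mc]'hmcl).src) := verts_getElem_src hmcl
          have h2 : (P c)[mc]'hmcl = f := by
            rw [List.getElem?_eq_getElem hmcl, Option.some_inj] at hf
            exact hf
          rw [h2] at h1
          exact Option.some_inj.mp (h1.symm.trans hmc)
        have hemem : e ∈ P j := List.mem_of_getElem? hpe
        exact htmp (v, j, c) hvbc e hemem hedst f hfmem hfsrc
      · exfalso
        rw [hedst] at hanch
        obtain ⟨m', n', hlt, hm', hn'⟩ := hSVS.onto_before_off hanch hvbc
        exact absurd (getElem?_inj' (hnd b) hm' hn') (Nat.ne_of_lt hlt)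
  -- position of a switch vertex on the path it switches off of
  have pos_of_switch_src : ∀ (v : V) (b c : Fin k), (v, b, c) ∈ 𝒱 →
      ∃ mb, (verts (P b))[mb]? = some v ∧ mb ≠ 0 ∧ mb ≤ (P b).length := by
    intro v b c h
    obtain ⟨⟨e, he, hedst⟩, -⟩ := hSVS.switch_exists h
    obtain ⟨q, hq, hqe⟩ := List.getElem_of_mem he
    refine ⟨q + 1, ?_, Nat.succ_ne_zero q, by omega⟩
    rw [verts_getElem_dst (hP b) hq, hqe, hedst]
  -- the main reachability construction, by induction along the switch tree
  have reach : ∀ (c : Fin k), Relation.ReflTransGen (svsEdge 𝒱) sIdx c →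
      ∀ m n, m ≤ n → n ≤ (P c).length → AnchorAt P sIdx 𝒱 c m →
      WTo P 𝒱 sIdx s c n := by
    intro c hc
    induction hc with
    | refl =>
        intro m n hmn hn hA
        rcases hA with ⟨-, rfl⟩ | ⟨v, b, hv, -⟩
        · exact ext_many sIdx 0 n (Nat.zero_le _) hn (Or.inl ⟨rfl, rfl⟩)
        · exact (hSVS.no_onto_source hv).elim
    | @tail b c hab hbc ih =>
        intro m n hmn hn hA
        obtain ⟨v, hvbc⟩ := hbc
        rcases hA with ⟨hcs, -⟩ | ⟨v', b', hv', hv'm⟩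
        · exact (hSVS.no_onto_source (hcs ▸ hvbc)).elim
        · obtain ⟨hvv, hbb⟩ := hSVS.unique_onto hv' hvbc
          rw [hvv] at hv'm
          obtain ⟨mb, hmb, hmb0, hmbl⟩ := pos_of_switch_src v b c hvbc
          have hWb : WTo P 𝒱 sIdx s b mb := by
            rcases hab.cases_tail with hbs | ⟨x, -, hx⟩
            · exact ih 0 mb (Nat.zero_le _) hmbl (Or.inl ⟨hbs, rfl⟩)
            · obtain ⟨u, hux⟩ := hx
              obtain ⟨m', n', hlt, hm', hn'⟩ := hSVS.onto_before_off hux hvbc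
              have hnb : n' = mb := getElem?_inj' (hnd b) hn' hmb
              exact ih m' mb (by omega) hmbl (Or.inr ⟨u, x, hux, hm'⟩)
          have hWc : WTo P 𝒱 sIdx s c m := switch_step v b c hvbc mb hmb hWb m hv'm
          exact ext_many c m n hmn hn hWc
  -- forward direction machinery
  have le_step : ∀ (i : Fin k) (a u : V) (e : TEdge V), le_on (P i) a u →
      e ∈ P i → e.src = u → le_on (P i) a e.dst := by
    intro i a u e hle he hsrc
    obtain ⟨m, n, hmn, hm, hn⟩ := hle
    obtain ⟨q, hq, hqe⟩ := List.getElem_of_mem he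
    have hq' : (verts (P i))[q]? = some u := by
      rw [verts_getElem_src hq, hqe, hsrc]
    have hnq : n = q := getElem?_inj' (hnd i) hn hq'
    refine ⟨m, q + 1, by omega, hm, ?_⟩
    rw [verts_getElem_dst (hP i) hq, hqe]
  have anch_step : ∀ (i : Fin k) (u : V) (e : TEdge V), AnchP P sIdx 𝒱 s i u → e ∈ P i →
      e.src = u → AnchP P sIdx 𝒱 s i e.dst := by
    rintro i u e (⟨rfl, hle⟩ | ⟨v, a, hv, hle⟩) he hsrc
    · exact Or.inl ⟨rfl, le_step _ _ _ _ hle he hsrc⟩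
    · exact Or.inr ⟨v, a, hv, le_step _ _ _ _ hle he hsrc⟩
  have walk_anch : ∀ p : List (Fin k × TEdge V), IsAWalk P p →
      p.Chain' (RespStep 𝒱) → (∀ x₀, p.head? = some x₀ → AnchP P sIdx 𝒱 s x₀.1 x₀.2.src) →
      ∀ x ∈ p, AnchP P sIdx 𝒱 s x.1 x.2.src := by
    intro p
    induction p with
    | nil => intro _ _ _ x hx; simp at hx
    | cons x rest ih =>
        intro hw hresp hhead y hy
        rcases List.mem_cons.mp hy with rfl | hy'
        · exact hhead y rfl
        · refine ih ⟨fun z hz => hw.1 z (List.mem_cons_of_mem _ hz),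
            (List.isChain_cons.mp hw.2).2⟩ (List.isChain_cons.mp hresp).2 ?_ y hy'
          intro z hz
          have hstep := (List.isChain_cons.mp hw.2).1 z hz
          have hrs := (List.isChain_cons.mp hresp).1 z hz
          have hAx : AnchP P sIdx 𝒱 s x.1 x.2.src := hhead x rfl
          have hAdx : AnchP P sIdx 𝒱 s x.1 x.2.dst :=
            anch_step _ _ _ hAx (hw.1 x (List.mem_cons_self)) rfl
          by_cases hij : x.1 = z.1
          · have h1 : z.1 = x.1 := hij.symm
            have h2 : z.2.src = x.2.dst := hstep.1.symm
            rw [h1, h2]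
            exact hAdx
          · have hv := hrs hij
            right
            refine ⟨x.2.dst, x.1, hv, ?_⟩
            obtain ⟨-, f, hf, hfsrc⟩ := hSVS.switch_exists hv
            obtain ⟨q, hq, hqe⟩ := List.getElem_of_mem hf
            have hq' : (verts (P z.1))[q]? = some x.2.dst := by
              rw [verts_getElem_src hq, hqe, hfsrc]
            exact ⟨q, q, le_refl _, hq', by rw [← hstep.1]; exact hq'⟩
  -- now the set equality
  have h0s : (verts (P sIdx))[0]? = some s := by
    rw [← List.head?_eq_getElem?]; exact hfirst
  ext w
  simp only [Set.mem_setOf_eq, Set.mem_union]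
  constructor
  · rintro (rfl | ⟨p, hne, hw, hresp, hhead, hlast⟩)
    · exact Or.inl ⟨0, 0, le_refl _, h0s, h0s⟩
    · obtain ⟨x, hx⟩ : ∃ x, p.getLast? = some x := by
        cases h : p.getLast? with
        | none => rw [h] at hlast; simp at hlast
        | some x => exact ⟨x, rfl⟩
      rw [hx, Option.map_some, Option.some_inj] at hlast
      have hH : ∀ x₀, p.head? = some x₀ → AnchP P sIdx 𝒱 s x₀.1 x₀.2.src := by
        intro x₀ hx₀
        rw [hx₀, Option.map_some, Option.some_inj] at hhead
        have hmem : x₀.2 ∈ P x₀.1 := hw.1 x₀ (List.mem_of_mem_head? hx₀)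
        obtain ⟨q, hq, hqe⟩ := List.getElem_of_mem hmem
        have hq' : (verts (P x₀.1))[q]? = some s := by
          rw [verts_getElem_src hq, hqe, hhead]
        have hs : s ∈ verts (P x₀.1) := List.mem_of_getElem? hq'
        have hx1 : x₀.1 = sIdx := honly _ hs
        exact Or.inl ⟨hx1, by rw [hhead]; exact ⟨0, 0, le_refl _, h0s, h0s⟩⟩
      have hxmem : x ∈ p := List.mem_of_getLast? hx
      have hA : AnchP P sIdx 𝒱 s x.1 x.2.src := walk_anch p hw hresp hH x hxmem
      have hAd : AnchP P sIdx 𝒱 s x.1 x.2.dst := anch_step _ _ _ hA (hw.1 x hxmem) rfl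
      rw [hlast] at hAd
      rcases hAd with ⟨-, hle⟩ | ⟨v, a, hv, hle⟩
      · exact Or.inl hle
      · exact Or.inr ⟨v, a, x.1, hv, hle⟩
  · rintro (⟨m, n, hmn, hm, hn⟩ | ⟨v, a, b, hv, m, n, hmn, hm, hn⟩)
    · have hm0 : m = 0 := getElem?_inj' (hnd sIdx) hm h0s
      exact wto_reach sIdx n w
        (reach sIdx Relation.ReflTransGen.refl 0 n (Nat.zero_le _) (verts_bound hn)
          (Or.inl ⟨rfl, rfl⟩)) hn
    · exact wto_reach b n w
        (reach b (hspan b) m n hmn (verts_bound hn) (Or.inr ⟨v, a, hv, hm⟩)) hn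
end

section
/- For every temporal k-path graph 𝒢 = ⊎𝒫 with source s on a distinguished base-path P_s, there exists a switch-vertex-set 𝒱 that is temporal in 𝒢 and satisfies R^𝒢(s) = R^𝒢_𝒱(s). -/
namespace Stmt3Aux
variable {V : Type} {k : ℕ}

lemma lab_lt' {α : Type} {g : α → TEdge V} {l : List α}
    (hc : l.Chain' (fun a b => TemporalStep (g a) (g b))) {m n : ℕ} (hmn : m < n)
    {a b : α} (ha : l[m]? = some a) (hb : l[n]? = some b) : (g a).lab < (g b).lab := by
  have hc2 : l.Chain' (fun a b => (g a).lab < (g b).lab) := hc.imp (fun _ _ h => h.2)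
  haveI : IsTrans α (fun a b => (g a).lab < (g b).lab) := ⟨fun _ _ _ => lt_trans⟩
  have hp := List.isChain_iff_pairwise.1 hc2
  rw [List.pairwise_iff_getElem] at hp
  obtain ⟨hm, ha⟩ := List.getElem?_eq_some_iff.1 ha
  obtain ⟨hn, hb⟩ := List.getElem?_eq_some_iff.1 hb
  have := hp m n hm hn hmn
  rwa [ha, hb] at this

lemma lab_lt {l : List (TEdge V)} (hc : l.Chain' TemporalStep) {m n : ℕ} (hmn : m < n)
    {a b : TEdge V} (ha : l[m]? = some a) (hb : l[n]? = some b) : a.lab < b.lab :=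
  lab_lt' (g := id) hc hmn ha hb

lemma lab_le {l : List (TEdge V)} (hc : l.Chain' TemporalStep) {m n : ℕ} (hmn : m ≤ n)
    {a b : TEdge V} (ha : l[m]? = some a) (hb : l[n]? = some b) : a.lab ≤ b.lab := by
  rcases eq_or_lt_of_le hmn with h | h
  · subst h; rw [ha] at hb; cases hb; rfl
  · exact (lab_lt hc h ha hb).le

lemma pos_lt_of_lab_lt {l : List (TEdge V)} (hc : l.Chain' TemporalStep) {m n : ℕ}
    {a b : TEdge V} (ha : l[m]? = some a) (hb : l[n]? = some b) (hab : a.lab < b.lab) :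
    m < n := by
  by_contra h
  exact absurd (lab_le hc (not_lt.1 h) hb ha) (not_le.2 hab)

lemma verts_src {l : List (TEdge V)} {m : ℕ} {e : TEdge V} (he : l[m]? = some e) :
    (verts l)[m]? = some e.src := by
  have hm : m < l.length := (List.getElem?_eq_some_iff.1 he).1
  rw [verts, List.getElem?_append, if_pos (by simpa using hm), List.getElem?_map, he]
  rfl

lemma verts_dst {l : List (TEdge V)} (hc : l.Chain' TemporalStep) {m : ℕ} {e : TEdge V}
    (he : l[m]? = some e) : (verts l)[m + 1]? = some e.dst := by
  have hm : m < l.length := (List.getElem?_eq_some_iff.1 he).1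
  by_cases h : m + 1 < l.length
  · have hb : l[m+1]? = some l[m+1] := List.getElem?_eq_some_iff.2 ⟨h, rfl⟩
    have hstep : TemporalStep l[m] l[m+1] := List.isChain_iff_getElem.1 hc m (by omega)
    have he2 : e = l[m] := ((List.getElem?_eq_some_iff.1 he).2).symm
    rw [verts_src hb, he2, hstep.1]
  · have hlen : m + 1 = l.length := by omega
    have hlast : l.getLast? = some e := by
      rw [List.getLast?_eq_getElem?, ← hlen]; simpa using he
    rw [verts, List.getElem?_append, if_neg (by simp; omega), hlast]
    simp [hlen]

lemma mem_pos {l : List (TEdge V)} {e : TEdge V} (he : e ∈ l) : ∃ m : ℕ, l[m]? = some e :=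
  List.mem_iff_getElem?.1 he

lemma edge_src_inj {l : List (TEdge V)} (hnd : (verts l).Nodup) {e f : TEdge V}
    (he : e ∈ l) (hf : f ∈ l) (h : e.src = f.src) : e = f := by
  obtain ⟨m, hm⟩ := mem_pos he
  obtain ⟨n, hn⟩ := mem_pos hf
  have h1 := verts_src hm
  have h2 := verts_src hn
  rw [← h] at h2
  obtain ⟨hm', hm''⟩ := List.getElem?_eq_some_iff.1 h1
  obtain ⟨hn', hn''⟩ := List.getElem?_eq_some_iff.1 h2
  have : m = n := (hnd.getElem_inj_iff).1 (by rw [hm'', hn''])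
  subst this; rw [hm] at hn; exact Option.some_injective _ hn

lemma edge_dst_inj {l : List (TEdge V)} (hc : l.Chain' TemporalStep)
    (hnd : (verts l).Nodup) {e f : TEdge V}
    (he : e ∈ l) (hf : f ∈ l) (h : e.dst = f.dst) : e = f := by
  obtain ⟨m, hm⟩ := mem_pos he
  obtain ⟨n, hn⟩ := mem_pos hf
  have h1 := verts_dst hc hm
  have h2 := verts_dst hc hn
  rw [← h] at h2
  obtain ⟨hm', hm''⟩ := List.getElem?_eq_some_iff.1 h1
  obtain ⟨hn', hn''⟩ := List.getElem?_eq_some_iff.1 h2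
  have : m + 1 = n + 1 := (hnd.getElem_inj_iff).1 (by rw [hm'', hn''])
  have : m = n := by omega
  subst this; rw [hm] at hn; exact Option.some_injective _ hn

lemma mem_src_verts {l : List (TEdge V)} {e : TEdge V} (he : e ∈ l) : e.src ∈ verts l :=
  List.mem_append_left _ (List.mem_map_of_mem he)

end Stmt3Aux

namespace Stmt3Aux
variable {V : Type} {k : ℕ}

/-- A usable annotated edge: some temporal walk from `s` ends with it. -/
def Usable (P : Fin k → List (TEdge V)) (s : V) (x : Fin k × TEdge V) : Prop :=
  ∃ p : List (Fin k × TEdge V), IsAWalk P p ∧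
    (p.head?.map fun y => y.2.src) = some s ∧ p.getLast? = some x

def HasU (P : Fin k → List (TEdge V)) (s : V) (i : Fin k) : Prop :=
  ∃ e, Usable P s (i, e)

noncomputable def fIdx (P : Fin k → List (TEdge V)) (s : V) (i : Fin k) : ℕ :=
  sInf {m | ∃ e, (P i)[m]? = some e ∧ Usable P s (i, e)}

lemma usable_mem {P : Fin k → List (TEdge V)} {s : V} {i : Fin k} {e : TEdge V}
    (hu : Usable P s (i, e)) : e ∈ P i := by
  obtain ⟨p, hw, -, hl⟩ := hu
  have : (i, e) ∈ p := by
    obtain ⟨ys, rfl⟩ := List.getLast?_eq_some_iff.1 hl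
    exact List.mem_append_right _ (List.mem_singleton_self _)
  exact hw.1 _ this

lemma hasU_spec {P : Fin k → List (TEdge V)} {s : V} {i : Fin k} (h : HasU P s i) :
    ∃ e, (P i)[fIdx P s i]? = some e ∧ Usable P s (i, e) := by
  obtain ⟨e, hu⟩ := h
  obtain ⟨m, hm⟩ := mem_pos (usable_mem hu)
  exact Nat.sInf_mem (⟨m, e, hm, hu⟩ : {m | ∃ e, (P i)[m]? = some e ∧ Usable P s (i, e)}.Nonempty)

lemma fIdx_le {P : Fin k → List (TEdge V)} {s : V} {i : Fin k} {n : ℕ} {e : TEdge V}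
    (h : (P i)[n]? = some e) (hu : Usable P s (i, e)) : fIdx P s i ≤ n :=
  Nat.sInf_le ⟨e, h, hu⟩

noncomputable def labOf (P : Fin k → List (TEdge V)) (s : V) (i : Fin k) : ℤ :=
  (((P i)[fIdx P s i]?).map TEdge.lab).getD 0

noncomputable def mu (P : Fin k → List (TEdge V)) (s : V) (i : Fin k) : ℕ :=
  Set.ncard {j : Fin k | HasU P s j ∧ labOf P s j < labOf P s i}

lemma mu_lt {P : Fin k → List (TEdge V)} {s : V} {a b : Fin k}
    (ha : HasU P s a) (hlab : labOf P s a < labOf P s b) : mu P s a < mu P s b := by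
  apply Set.ncard_lt_ncard _ (Set.toFinite _)
  constructor
  · rintro j ⟨h1, h2⟩; exact ⟨h1, h2.trans hlab⟩
  · intro hsub
    have := hsub ⟨ha, hlab⟩
    exact absurd this.2 (lt_irrefl _)

/-- Every usable edge on the source path has position `≥ fIdx`; moreover the first
usable edge on the source path starts at `s`. -/
lemma first_edge {P : Fin k → List (TEdge V)} {sIdx : Fin k} {s : V}
    (honly : ∀ i, s ∈ verts (P i) → i = sIdx)
    {i : Fin k} {e : TEdge V} (hu : Usable P s (i, e)) :
    ∃ h : TEdge V, h ∈ P sIdx ∧ h.src = s ∧ Usable P s (sIdx, h) ∧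
      (h.lab < e.lab ∨ (i = sIdx ∧ e = h)) := by
  obtain ⟨p, hw, hhead, hlast⟩ := hu
  obtain ⟨x, rest, rfl⟩ : ∃ x rest, p = x :: rest := by
    cases p with
    | nil => simp at hlast
    | cons x rest => exact ⟨x, rest, rfl⟩
  have hx : x.2.src = s := by
    simp only [List.head?_cons, Option.map_some] at hhead
    exact Option.some_injective _ hhead
  have hxm : x.2 ∈ P x.1 := hw.1 _ (List.mem_cons_self)
  have hxi : x.1 = sIdx := honly _ (hx ▸ mem_src_verts hxm)
  have hux : Usable P s (sIdx, x.2) := by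
    refine ⟨[x], ⟨fun y hy => ?_, List.isChain_singleton _⟩, ?_, ?_⟩
    · rw [List.mem_singleton] at hy; subst hy; exact hxm
    · simp [hx]
    · simp [← hxi]
  refine ⟨x.2, hxi ▸ hxm, hx, hux, ?_⟩
  cases rest with
  | nil =>
    right
    simp only [List.getLast?_singleton] at hlast
    have : x = (i, e) := Option.some_injective _ hlast
    rw [this] at hxi
    exact ⟨hxi, Prod.ext_iff.1 this |>.2.symm ▸ rfl⟩
  | cons y ys =>
    left
    have h0 : (x :: y :: ys)[0]? = some x := rfl
    have hlen : (x :: y :: ys).length - 1 < (x :: y :: ys).length := by simp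
    have hl2 : (x :: y :: ys)[(x :: y :: ys).length - 1]? = some (i, e) := by
      rw [← List.getLast?_eq_getElem?]; exact hlast
    have hpos : 0 < (x :: y :: ys).length - 1 := by simp
    exact lab_lt' (g := fun y => y.2) hw.2 hpos h0 hl2

lemma sIdx_first {P : Fin k → List (TEdge V)} {sIdx : Fin k} {s : V}
    (hP : ∀ i, IsTemporalPath (P i))
    (honly : ∀ i, s ∈ verts (P i) → i = sIdx)
    {e : TEdge V} (he : (P sIdx)[fIdx P s sIdx]? = some e) (hu : Usable P s (sIdx, e)) :
    e.src = s := by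
  obtain ⟨h, hmem, hsrc, huh, hor⟩ := first_edge honly hu
  rcases hor with hlt | ⟨-, rfl⟩
  · obtain ⟨n, hn⟩ := mem_pos hmem
    have h1 : fIdx P s sIdx ≤ n := fIdx_le hn huh
    have := lab_le (hP sIdx) h1 he hn
    omega
  · exact hsrc

end Stmt3Aux

namespace Stmt3Aux
variable {V : Type} {k : ℕ}

/-- The defining property of the chosen switch onto base-path `i`. -/
def Spec (P : Fin k → List (TEdge V)) (s : V) (i : Fin k) (va : V × Fin k) : Prop :=
  ∃ f e : TEdge V, va.2 ≠ i ∧ f ∈ P va.2 ∧ Usable P s (va.2, f) ∧ f.dst = va.1 ∧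
    f.lab < e.lab ∧ (P i)[fIdx P s i]? = some e ∧ e.src = va.1

lemma exists_spec {P : Fin k → List (TEdge V)} {sIdx : Fin k} {s : V}
    (hP : ∀ i, IsTemporalPath (P i))
    (honly : ∀ i, s ∈ verts (P i) → i = sIdx)
    {i : Fin k} (hi : i ≠ sIdx) (h : HasU P s i) : ∃ va, Spec P s i va := by
  obtain ⟨e, he, hu⟩ := hasU_spec h
  obtain ⟨p, hw, hhead, hlast⟩ := hu
  obtain ⟨ys, rfl⟩ := List.getLast?_eq_some_iff.1 hlast
  cases hys : ys with
  | nil =>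
    exfalso
    subst hys
    have hs : e.src = s := by
      simp only [List.nil_append, List.head?_cons, Option.map_some] at hhead
      exact Option.some_injective _ hhead
    have : e ∈ P i := by
      exact (List.getElem?_eq_some_iff.1 he).2 ▸ List.getElem_mem _
    exact hi (honly _ (hs ▸ mem_src_verts this))
  | cons z zs =>
    subst hys
    set y := (z :: zs).getLast (by simp) with hy
    have hylast : (z :: zs).getLast? = some y := List.getLast?_eq_getLast _
    obtain ⟨a, f⟩ := y
    have hchain := hw.2
    rw [List.Chain', List.isChain_append] at hchain
    have hstep : TemporalStep f e := by
      have := hchain.2.2 (a, f) hylast (i, e) rfl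
      exact this
    have hymem : (a, f) ∈ z :: zs := by
      rw [hy]; exact List.getLast_mem _
    have hfmem : f ∈ P a := hw.1 _ (List.mem_append_left _ hymem)
    have huf : Usable P s (a, f) := by
      refine ⟨z :: zs, ⟨fun x hx => hw.1 _ (List.mem_append_left _ hx), hchain.1⟩, ?_, hylast⟩
      simpa using hhead
    have hai : a ≠ i := by
      rintro rfl
      obtain ⟨n, hn⟩ := mem_pos hfmem
      have h1 : fIdx P s a ≤ n := fIdx_le hn huf
      have h2 : n < fIdx P s a := pos_lt_of_lab_lt (hP a) hn he hstep.2
      omega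
    exact ⟨(e.src, a), f, e, hai, hfmem, huf, hstep.1, hstep.2, he, rfl⟩

/-- The chosen switch onto `i`. -/
noncomputable def swVA (P : Fin k → List (TEdge V)) (sIdx : Fin k) (s : V)
    (hP : ∀ i, IsTemporalPath (P i))
    (honly : ∀ i, s ∈ verts (P i) → i = sIdx)
    (i : Fin k) (h : i ≠ sIdx ∧ HasU P s i) : V × Fin k :=
  (exists_spec hP honly h.1 h.2).choose

lemma swVA_spec {P : Fin k → List (TEdge V)} {sIdx : Fin k} {s : V}
    (hP : ∀ i, IsTemporalPath (P i))
    (honly : ∀ i, s ∈ verts (P i) → i = sIdx)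
    {i : Fin k} (h : i ≠ sIdx ∧ HasU P s i) :
    Spec P s i (swVA P sIdx s hP honly i h) :=
  (exists_spec hP honly h.1 h.2).choose_spec

/-- A resp-usable annotated edge: some `𝒱`-respecting temporal walk from `s` ends with it. -/
def RespUsable (P : Fin k → List (TEdge V)) (𝒱 : Set (V × Fin k × Fin k)) (s : V)
    (x : Fin k × TEdge V) : Prop :=
  ∃ p : List (Fin k × TEdge V), IsAWalk P p ∧ p.Chain' (RespStep 𝒱) ∧
    (p.head?.map fun y => y.2.src) = some s ∧ p.getLast? = some x

lemma resp_append {P : Fin k → List (TEdge V)} {𝒱 : Set (V × Fin k × Fin k)} {s : V}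
    {x y : Fin k × TEdge V} (hx : RespUsable P 𝒱 s x) (hy : y.2 ∈ P y.1)
    (hstep : TemporalStep x.2 y.2) (hresp : RespStep 𝒱 x y) :
    RespUsable P 𝒱 s y := by
  obtain ⟨p, ⟨hmem, hch⟩, hrch, hhead, hlast⟩ := hx
  refine ⟨p ++ [y], ⟨?_, ?_⟩, ?_, ?_, ?_⟩
  · intro z hz
    rcases List.mem_append.1 hz with h | h
    · exact hmem _ h
    · rw [List.mem_singleton] at h; subst h; exact hy
  · rw [List.Chain', List.isChain_append]
    refine ⟨hch, List.isChain_singleton _, ?_⟩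
    intro u hu v hv
    rw [hlast] at hu
    simp only [List.head?_cons] at hv
    cases hu; cases hv; exact hstep
  · rw [List.Chain', List.isChain_append]
    refine ⟨hrch, List.isChain_singleton _, ?_⟩
    intro u hu v hv
    rw [hlast] at hu
    simp only [List.head?_cons] at hv
    cases hu; cases hv; exact hresp
  · obtain ⟨ys, rfl⟩ := List.getLast?_eq_some_iff.1 hlast
    cases ys <;> simpa using hhead
  · exact List.getLast?_concat

lemma resp_step {P : Fin k → List (TEdge V)} {𝒱 : Set (V × Fin k × Fin k)} {s : V}
    (hP : ∀ i, IsTemporalPath (P i)) {i : Fin k} {m : ℕ} {e e' : TEdge V}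
    (hx : RespUsable P 𝒱 s (i, e)) (he : (P i)[m]? = some e) (he' : (P i)[m+1]? = some e') :
    RespUsable P 𝒱 s (i, e') := by
  have hmem : e' ∈ P i := (List.getElem?_eq_some_iff.1 he').2 ▸ List.getElem_mem _
  have hm1 : m + 1 < (P i).length := (List.getElem?_eq_some_iff.1 he').1
  have hstep : TemporalStep e e' := by
    have := List.isChain_iff_getElem.1 (hP i) m (by omega)
    have h1 : (P i)[m] = e := (List.getElem?_eq_some_iff.1 he).2
    have h2 : (P i)[m+1] = e' := (List.getElem?_eq_some_iff.1 he').2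
    simpa [List.get_eq_getElem, h1, h2] using this
  exact resp_append hx hmem hstep (fun h => absurd rfl h)

lemma resp_many {P : Fin k → List (TEdge V)} {𝒱 : Set (V × Fin k × Fin k)} {s : V}
    (hP : ∀ i, IsTemporalPath (P i)) {i : Fin k} {m : ℕ} {e : TEdge V}
    (he : (P i)[m]? = some e) (hx : RespUsable P 𝒱 s (i, e)) :
    ∀ n, m ≤ n → ∀ {e' : TEdge V}, (P i)[n]? = some e' → RespUsable P 𝒱 s (i, e') := by
  intro n
  induction n with
  | zero =>
    intro hmn e' he'
    have : m = 0 := Nat.le_zero.1 hmn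
    subst this; rw [he] at he'; cases he'; exact hx
  | succ n ih =>
    intro hmn e' he'
    rcases Nat.lt_or_ge m (n+1) with h | h
    · have hn : n < (P i).length := by
        have := (List.getElem?_eq_some_iff.1 he').1; omega
      have hmid : (P i)[n]? = some (P i)[n] := List.getElem?_eq_some_iff.2 ⟨hn, rfl⟩
      exact resp_step hP (ih (by omega) hmid) hmid he'
    · have : m = n + 1 := by omega
      subst this; rw [he] at he'; cases he'; exact hx

end Stmt3Aux


open Stmt3Aux in
/-- For every temporal `k`-path graph `⊎ P` whose source `s`
lies on the distinguished base-path `P sIdx` (and only there), there exists a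
switch-vertex-set `𝒱` that is temporal in `⊎ P` and such that the set of
vertices reachable from `s` equals the set of vertices reachable from `s` by
`𝒱`-respecting temporal walks. -/
theorem stmt3 {V : Type} {k : ℕ} (P : Fin k → List (TEdge V))
    (hP : ∀ i, IsTemporalPath (P i)) (hnd : ∀ i, (verts (P i)).Nodup)
    (sIdx : Fin k) (s : V)
    (honly : ∀ i, s ∈ verts (P i) → i = sIdx) :
    ∃ 𝒱 : Set (V × Fin k × Fin k), IsSVS P sIdx 𝒱 ∧
      (∀ sw ∈ 𝒱, TemporalSwitch P sw.1 sw.2.1 sw.2.2) ∧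
      {w | Reaches P s w} = {w | ReachesResp P 𝒱 s w} := by
  classical
  set 𝒱 : Set (V × Fin k × Fin k) :=
    {x | ∃ h : x.2.2 ≠ sIdx ∧ HasU P s x.2.2,
      (x.1, x.2.1) = swVA P sIdx s hP honly x.2.2 h} with h𝒱
  have specOf : ∀ {v : V} {a b : Fin k}, (v, a, b) ∈ 𝒱 → Spec P s b (v, a) := by
    rintro v a b ⟨h, heq⟩
    rw [show ((v, a, b) : V × Fin k × Fin k).1 = v from rfl] at heq
    rw [heq]
    exact swVA_spec hP honly h
  -- main induction: the first usable edge of each active path is resp-usable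
  have key : ∀ N : ℕ, ∀ i : Fin k, HasU P s i → mu P s i = N →
      ∀ e, (P i)[fIdx P s i]? = some e → RespUsable P 𝒱 s (i, e) := by
    intro N
    induction N using Nat.strong_induction_on with
    | _ N ih =>
      intro i hU hmu e he
      by_cases hi : i = sIdx
      · rw [hi] at hU he ⊢
        obtain ⟨e', he', hu'⟩ := hasU_spec hU
        rw [he] at he'
        cases he'
        have hs := sIdx_first hP honly he hu'
        have hmem : e ∈ P sIdx := (List.getElem?_eq_some_iff.1 he).2 ▸ List.getElem_mem _
        refine ⟨[(sIdx, e)], ⟨?_, List.isChain_singleton _⟩, List.isChain_singleton _,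
          by simp [hs], by simp⟩
        intro x hx; rw [List.mem_singleton] at hx; subst hx; exact hmem
      · have hGood : i ≠ sIdx ∧ HasU P s i := ⟨hi, hU⟩
        obtain ⟨f, e₂, hai, hfmem, huf, hfdst, hflab, he₂, hesrc⟩ := swVA_spec hP honly hGood
        rw [he] at he₂
        have he₂' : e = e₂ := Option.some_injective _ he₂
        subst he₂'
        set va := swVA P sIdx s hP honly i hGood with hva
        have hUa : HasU P s va.2 := ⟨f, huf⟩
        obtain ⟨ea, hea, huea⟩ := hasU_spec hUa
        obtain ⟨n, hn⟩ := mem_pos hfmem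
        have h1 : fIdx P s va.2 ≤ n := fIdx_le hn huf
        have h2 : ea.lab ≤ f.lab := lab_le (hP va.2) h1 hea hn
        have hlab : labOf P s va.2 < labOf P s i := by
          simp only [labOf, hea, he, Option.map_some, Option.getD_some]
          omega
        have hmua := mu_lt hUa hlab
        have hra := ih (mu P s va.2) (hmu ▸ hmua) va.2 hUa rfl ea hea
        have hrf : RespUsable P 𝒱 s (va.2, f) := resp_many hP hea hra n h1 hn
        refine resp_append hrf ((List.getElem?_eq_some_iff.1 he).2 ▸ List.getElem_mem _)
          ⟨hfdst.trans hesrc.symm, hflab⟩ ?_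
        intro _
        exact ⟨hGood, by rw [hfdst]⟩
  have main : ∀ i (e : TEdge V), Usable P s (i, e) → RespUsable P 𝒱 s (i, e) := by
    intro i e hu
    have hU : HasU P s i := ⟨e, hu⟩
    obtain ⟨e₀, he₀, hu₀⟩ := hasU_spec hU
    obtain ⟨n, hn⟩ := mem_pos (usable_mem hu)
    exact resp_many hP he₀ (key (mu P s i) i hU rfl e₀ he₀) n (fIdx_le hn hu) hn
  refine ⟨𝒱, ⟨?_, ?_, ?_, ?_, ?_⟩, ?_, ?_⟩
  · -- switch_exists
    rintro v a b hm
    obtain ⟨f, e, -, hfmem, -, hfdst, -, he, hesrc⟩ := specOf hm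
    exact ⟨⟨f, hfmem, hfdst⟩, ⟨e, (List.getElem?_eq_some_iff.1 he).2 ▸ List.getElem_mem _, hesrc⟩⟩
  · -- unique_onto
    rintro v v' a a' b ⟨h1, heq1⟩ ⟨h2, heq2⟩
    have h3 : ((v, a) : V × Fin k) = (v', a') := heq1.trans heq2.symm
    exact ⟨congrArg Prod.fst h3, congrArg Prod.snd h3⟩
  · -- no_onto_source
    rintro v a ⟨h, -⟩
    exact h.1 rfl
  · -- onto_before_off
    rintro v a b hm1 v' c hm2
    obtain ⟨f₁, e₁, -, -, -, -, -, he₁, he₁src⟩ := specOf hm1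
    obtain ⟨f₂, e₂, -, hf₂mem, huf₂, hf₂dst, -, -, -⟩ := specOf hm2
    obtain ⟨n, hn⟩ := mem_pos hf₂mem
    have h1 : fIdx P s b ≤ n := fIdx_le hn huf₂
    refine ⟨fIdx P s b, n + 1, by omega, ?_, ?_⟩
    · rw [verts_src he₁, he₁src]
    · rw [verts_dst (hP b) hn, hf₂dst]
  · -- tree
    have treeAux : ∀ N : ℕ, ∀ a : Fin k, HasU P s a → mu P s a = N →
        Relation.ReflTransGen (svsEdge 𝒱) sIdx a := by
      intro N
      induction N using Nat.strong_induction_on with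
      | _ N ih =>
        intro a hU hmu
        by_cases ha : a = sIdx
        · subst ha; exact .refl
        · have hGood : a ≠ sIdx ∧ HasU P s a := ⟨ha, hU⟩
          obtain ⟨f, e₂, hai, hfmem, huf, hfdst, hflab, he₂, hesrc⟩ := swVA_spec hP honly hGood
          set va := swVA P sIdx s hP honly a hGood with hva
          have hUa : HasU P s va.2 := ⟨f, huf⟩
          obtain ⟨ea, hea, -⟩ := hasU_spec hUa
          obtain ⟨n, hn⟩ := mem_pos hfmem
          have h1 : fIdx P s va.2 ≤ n := fIdx_le hn huf
          have h2 : ea.lab ≤ f.lab := lab_le (hP va.2) h1 hea hn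
          have hlab : labOf P s va.2 < labOf P s a := by
            simp only [labOf, hea, he₂, Option.map_some, Option.getD_some]
            omega
          have hmua := mu_lt hUa hlab
          exact (ih (mu P s va.2) (hmu ▸ hmua) va.2 hUa rfl).tail ⟨va.1, ⟨hGood, rfl⟩⟩
    rintro v a b hm
    obtain ⟨f, e, -, -, huf, -, -, -, -⟩ := specOf hm
    exact treeAux (mu P s a) a ⟨f, huf⟩ rfl
  · -- temporal switches
    rintro ⟨v, a, b⟩ hm
    obtain ⟨f₁, e₁, -, hf₁mem, -, hf₁dst, hlab, he₁, he₁src⟩ := specOf hm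
    intro e hea hedst f hfb hfsrc
    have he₁mem : e₁ ∈ P b := (List.getElem?_eq_some_iff.1 he₁).2 ▸ List.getElem_mem _
    have h3 : e = f₁ := edge_dst_inj (hP a) (hnd a) hea hf₁mem (hedst.trans hf₁dst.symm)
    have h4 : f = e₁ := edge_src_inj (hnd b) hfb he₁mem (hfsrc.trans he₁src.symm)
    rw [h3, h4]; exact hlab
  · -- reachability sets agree
    ext w
    simp only [Set.mem_setOf_eq]
    constructor
    · rintro (rfl | ⟨p, hne, hw, hhead, hlastmap⟩)
      · exact Or.inl rfl
      · obtain ⟨x, hlast, hdst⟩ := Option.map_eq_some_iff.1 hlastmap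
        have hu : Usable P s (x.1, x.2) := ⟨p, hw, hhead, hlast⟩
        obtain ⟨q, hq1, hq2, hq3, hq4⟩ := main _ _ hu
        refine Or.inr ⟨q, ?_, hq1, hq2, hq3, ?_⟩
        · rintro rfl; simp at hq4
        · rw [hq4, Option.map_some]
          exact congrArg some hdst
    · rintro (rfl | ⟨p, hne, hw, -, hhead, hlast⟩)
      · exact Or.inl rfl
      · exact Or.inr ⟨p, hne, hw, hhead, hlast⟩
end

section
/- Let 𝒫 be a collection of k static directed paths and s a vertex on them; for a labeling λ assigning an integer label to each edge of each path such that labels are strictly increasing along each path, let R_λ(s) denote the set of vertices reachable from s in the temporal k-path graph (⊎𝒫, λ). Then the maximum of |R_λ(s)| over all such labelings λ equals the maximum of |R_λ(s)| over the restricted labelings in which, for each path P ∈ 𝒫, the labels along P are consecutive integers t_P, t_P + 1, t_P + 2, … determined by a start time t_P. -/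
/-- Turn a static path into a temporal path using a position-indexed labeling. -/
def mkTemporal {V : Type} (p : List (V × V)) (ℓ : ℕ → ℤ) : List (TEdge V) :=
  p.mapIdx fun n e => ⟨e.1, e.2, ℓ n⟩

/-! ### Auxiliary machinery -/

/-- The temporal edge at position `a` of path `p` with labeling `f`
(using default `d` out of range). -/
def teAt {V : Type} (p : List (V × V)) (f : ℕ → ℤ) (d : V × V) (a : ℕ) : TEdge V :=
  ⟨(p.getD a d).1, (p.getD a d).2, f a⟩

lemma teAt_mem {V : Type} (p : List (V × V)) (f : ℕ → ℤ) (d : V × V) {a : ℕ}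
    (ha : a < p.length) : teAt p f d a ∈ mkTemporal p f := by
  rw [List.mem_iff_getElem]
  refine ⟨a, by simpa [mkTemporal] using ha, ?_⟩
  simp [mkTemporal, List.getElem_mapIdx, teAt, List.getD_eq_getElem p d ha,
    List.getElem?_eq_getElem ha]

lemma mem_mkTemporal {V : Type} {p : List (V × V)} {f : ℕ → ℤ} (d : V × V) {e : TEdge V}
    (he : e ∈ mkTemporal p f) : ∃ a, a < p.length ∧ e = teAt p f d a := by
  rw [List.mem_iff_getElem] at he
  obtain ⟨a, ha, he⟩ := he
  have ha' : a < p.length := by simpa [mkTemporal] using ha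
  refine ⟨a, ha', ?_⟩
  rw [← he]
  simp [mkTemporal, List.getElem_mapIdx, teAt, List.getD_eq_getElem p d ha',
    List.getElem?_eq_getElem ha']

/-- A walk from `s` ending exactly at the temporal edge `e` of base-path `i`. -/
def Boards {V : Type} {k : ℕ} (P : Fin k → List (TEdge V)) (s : V) (i : Fin k)
    (e : TEdge V) : Prop :=
  ∃ p, IsAWalk P p ∧ (p.head?.map fun x => x.2.src) = some s ∧
    p.getLast? = some (i, e)

lemma boards_single {V : Type} {k : ℕ} {P : Fin k → List (TEdge V)} {s : V} {i : Fin k}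
    {e : TEdge V} (h1 : e ∈ P i) (h2 : e.src = s) : Boards P s i e := by
  exact ⟨[(i, e)], ⟨by simpa using h1, List.isChain_singleton _⟩, by simp [h2], by simp⟩

lemma boards_snoc {V : Type} {k : ℕ} {P : Fin k → List (TEdge V)} {s : V} {i j : Fin k}
    {e e' : TEdge V} (h : Boards P s i e) (h1 : e' ∈ P j) (h2 : e.dst = e'.src)
    (h3 : e.lab < e'.lab) : Boards P s j e' := by
  obtain ⟨p, ⟨hmem, hch⟩, hhd, hlast⟩ := h
  have hne : p ≠ [] := by
    rintro rfl; simp at hlast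
  refine ⟨p ++ [(j, e')], ⟨?_, ?_⟩, ?_, ?_⟩
  · intro x hx
    rcases List.mem_append.1 hx with hx | hx
    · exact hmem x hx
    · simp at hx; subst hx; exact h1
  · refine List.isChain_append.2 ?_
    refine ⟨hch, List.isChain_singleton _, ?_⟩
    intro x hx y hy
    simp only [List.head?_cons, Option.mem_def, Option.some_inj] at hy
    rw [Option.mem_def, hlast, Option.some_inj] at hx
    subst hx; subst hy
    exact ⟨h2, h3⟩
  · rw [List.head?_append_of_ne_nil _ hne, hhd]
  · simp [List.getLast?_concat]

lemma boards_reaches {V : Type} {k : ℕ} {P : Fin k → List (TEdge V)} {s : V} {i : Fin k}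
    {e : TEdge V} (h : Boards P s i e) : Reaches P s e.dst := by
  obtain ⟨p, hw, hhd, hlast⟩ := h
  refine Or.inr ⟨p, ?_, hw, hhd, by rw [hlast]; rfl⟩
  rintro rfl; simp at hlast

/-- Monotonicity of a labeling that strictly increases along positions. -/
lemma lab_mono {L : ℕ} {f : ℕ → ℤ} (hf : ∀ n, n + 1 < L → f n < f (n + 1))
    {a b : ℕ} (hab : a ≤ b) (hb : b < L) : f a ≤ f b := by
  induction b, hab using Nat.le_induction with
  | base => exact le_refl _
  | succ b hab ih => exact le_of_lt (lt_of_le_of_lt (ih (by omega)) (hf b hb))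

/-- Extend a boarding walk further along its own base-path. -/
lemma boards_extend {V : Type} {k : ℕ} {paths : Fin k → List (V × V)}
    (hpaths : ∀ i, (paths i).Chain' (fun e f => e.2 = f.1))
    {g : Fin k → ℕ → ℤ} (hg : ∀ i n, n + 1 < (paths i).length → g i n < g i (n + 1))
    {s : V} {d : V × V} {i : Fin k} {a b : ℕ} (hab : a ≤ b) (hb : b < (paths i).length)
    (h : Boards (fun j => mkTemporal (paths j) (g j)) s i (teAt (paths i) (g i) d a)) :
    Boards (fun j => mkTemporal (paths j) (g j)) s i (teAt (paths i) (g i) d b) := by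
  induction b, hab using Nat.le_induction with
  | base => exact h
  | succ b hab ih =>
    have hb' : b < (paths i).length := by omega
    have hchain := (List.isChain_iff_getElem.1 (hpaths i)) b (by omega)
    refine boards_snoc (ih hb') (teAt_mem _ _ _ hb) ?_ ?_
    · show ((paths i).getD b d).2 = ((paths i).getD (b + 1) d).1
      rw [List.getD_eq_getElem _ d hb', List.getD_eq_getElem _ d hb]
      simpa [List.get_eq_getElem] using hchain
    · exact hg i b hb

/-- For a collection of `k` static directed paths and a vertex
`s`, the maximum over all labelings that are strictly increasing along each path
of the number of vertices reachable from `s` equals the maximum over the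
restricted labelings in which the labels along each path `P` are the consecutive
integers `t_P, t_P + 1, t_P + 2, …` determined by a start time `t_P`. -/
theorem stmt8 {V : Type} [Fintype V] {k : ℕ} (paths : Fin k → List (V × V))
    (hpaths : ∀ i, (paths i).Chain' (fun e f => e.2 = f.1)) (s : V) :
    sSup {m : ℕ | ∃ ℓ : Fin k → ℕ → ℤ,
        (∀ i n, n + 1 < (paths i).length → ℓ i n < ℓ i (n + 1)) ∧
        m = {w | Reaches (fun i => mkTemporal (paths i) (ℓ i)) s w}.ncard} =
    sSup {m : ℕ | ∃ t : Fin k → ℤ,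
        m = {w | Reaches (fun i => mkTemporal (paths i) (fun n => t i + n)) s w}.ncard} := by
  classical
  set A := {m : ℕ | ∃ ℓ : Fin k → ℕ → ℤ,
        (∀ i n, n + 1 < (paths i).length → ℓ i n < ℓ i (n + 1)) ∧
        m = {w | Reaches (fun i => mkTemporal (paths i) (ℓ i)) s w}.ncard} with hA
  set B := {m : ℕ | ∃ t : Fin k → ℤ,
        m = {w | Reaches (fun i => mkTemporal (paths i) (fun n => t i + n)) s w}.ncard} with hB
  have hBdd : ∀ (S : Set V), S.ncard ≤ Fintype.card V := by
    intro S
    calc S.ncard ≤ (Set.univ : Set V).ncard :=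
          Set.ncard_le_ncard (Set.subset_univ S) Set.finite_univ
      _ = Fintype.card V := by rw [Set.ncard_univ, Nat.card_eq_fintype_card]
  have hBddA : BddAbove A := by
    refine ⟨Fintype.card V, ?_⟩
    rintro m ⟨ℓ, _, rfl⟩; exact hBdd _
  have hBddB : BddAbove B := by
    refine ⟨Fintype.card V, ?_⟩
    rintro m ⟨t, rfl⟩; exact hBdd _
  have hBA : B ⊆ A := by
    rintro m ⟨t, rfl⟩
    exact ⟨fun i n => t i + n, fun i n _ => by push_cast; omega, rfl⟩
  have hAne : A.Nonempty := ⟨_, hBA ⟨fun _ => 0, rfl⟩⟩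
  apply le_antisymm
  · -- hard direction
    apply csSup_le hAne
    rintro m ⟨f, hf, rfl⟩
    -- setup
    set Pf := fun i => mkTemporal (paths i) (f i) with hPf
    set d : V × V := (s, s) with hd
    set BSet : Fin k → Set ℕ := fun i =>
      {a | a < (paths i).length ∧ Boards Pf s i (teAt (paths i) (f i) d a)} with hBSet
    set Bd : Fin k → Prop := fun i => (BSet i).Nonempty with hBd
    set aP : Fin k → ℕ := fun i => sInf (BSet i) with haPdef
    have haP : ∀ i, Bd i → aP i ∈ BSet i := fun i h => Nat.sInf_mem h
    set c : Fin k → ℕ := fun i => {j | Bd j ∧ f j (aP j) < f i (aP i)}.ncard with hc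
    set L : ℕ := ∑ j, (paths j).length with hL
    have hLj : ∀ j, (paths j).length ≤ L := by
      intro j
      exact Finset.single_le_sum (f := fun j => (paths j).length)
        (fun _ _ => Nat.zero_le _) (Finset.mem_univ j)
    set N : ℤ := (L : ℤ) + 1 with hN
    set t : Fin k → ℤ := fun i => if Bd i then N * c i - aP i else 0 with ht
    set g : Fin k → ℕ → ℤ := fun i n => t i + n with hg
    have hgmono : ∀ i n, n + 1 < (paths i).length → g i n < g i (n + 1) := by
      intro i n _; simp only [hg]; push_cast; omega
    set Pg := fun i => mkTemporal (paths i) (g i) with hPg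
    -- c is strictly monotone along the dependency order
    have hclt : ∀ j i, Bd j → Bd i → f j (aP j) < f i (aP i) → c j < c i := by
      intro j i hBj hBi hlt
      apply Set.ncard_lt_ncard _ (Set.toFinite _)
      constructor
      · rintro x ⟨hbx, hx⟩; exact ⟨hbx, hx.trans hlt⟩
      · intro hsub
        have : f j (aP j) < f j (aP j) := (hsub ⟨hBj, hlt⟩).2
        omega
    -- the key arithmetic inequality
    have htlt : ∀ j i, Bd j → Bd i → f j (aP j) < f i (aP i) → ∀ b, b < (paths j).length →
        g j b < g i (aP i) := by
      intro j i hBj hBi hlt b hb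
      have hcc : (c j : ℤ) + 1 ≤ c i := by exact_mod_cast hclt j i hBj hBi hlt
      have hbN : (b : ℤ) < N := by
        have := hLj j
        rw [hN]; push_cast; omega
      have hN0 : (0 : ℤ) ≤ N := by rw [hN]; positivity
      have hmul : N * ((c j : ℤ) + 1) ≤ N * c i := mul_le_mul_of_nonneg_left hcc hN0
      simp only [hg, ht, if_pos hBj, if_pos hBi]
      have haPj : (0 : ℤ) ≤ (aP j : ℤ) := Int.natCast_nonneg _
      nlinarith [hmul, hbN, haPj]
    -- main claim: each boardable path is boardable at position aP i in the new labeling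
    have main : ∀ i, Bd i → Boards Pg s i (teAt (paths i) (g i) d (aP i)) := by
      have H : ∀ n i, Bd i → c i < n → Boards Pg s i (teAt (paths i) (g i) d (aP i)) := by
        intro n
        induction n with
        | zero => intro i _ hci; omega
        | succ n ih =>
          intro i hBi hci
          obtain ⟨hai, p, ⟨hmem, hch⟩, hhd, hlast⟩ := haP i hBi
          rcases List.eq_nil_or_concat p with rfl | ⟨q, x, rfl⟩
          · simp at hlast
          · simp only [List.concat_eq_append] at hmem hch hhd hlast
            have hx : x = (i, teAt (paths i) (f i) d (aP i)) := by
              simpa [List.getLast?_concat] using hlast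
            subst hx
            rcases eq_or_ne q [] with rfl | hq
            · -- single-edge walk: starts at s
              have hsrc : (teAt (paths i) (f i) d (aP i)).src = s := by
                simpa using hhd
              refine boards_single (teAt_mem _ _ _ hai) ?_
              exact hsrc
            · -- walk with a previous edge on path j
              obtain ⟨z, hz⟩ : ∃ z, q.getLast? = some z :=
                ⟨q.getLast hq, List.getLast?_eq_getLast hq⟩
              have hzq : z ∈ q := List.mem_of_mem_getLast? hz
              have hzPf : z.2 ∈ Pf z.1 := hmem z (List.mem_append.2 (Or.inl hzq))
              obtain ⟨b, hbl, hbe⟩ := mem_mkTemporal d hzPf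
              -- the step from z to the last edge
              have hstep : TemporalStep z.2 (teAt (paths i) (f i) d (aP i)) := by
                have := (List.isChain_append.1 hch).2.2
                exact this z hz _ rfl
              -- q is itself a walk from s boarding path z.1 at position b
              have hBoardsb : Boards Pf s z.1 (teAt (paths z.1) (f z.1) d b) := by
                refine ⟨q, ⟨fun y hy => hmem y (List.mem_append.2 (Or.inl hy)),
                  (List.isChain_append.1 hch).1⟩, ?_, ?_⟩
                · rw [← hhd, List.head?_append_of_ne_nil _ hq]
                · rw [hz, ← hbe]
              set j := z.1 with hj
              have hbB : b ∈ BSet j := ⟨hbl, hBoardsb⟩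
              have hBj : Bd j := ⟨b, hbB⟩
              have haPb : aP j ≤ b := Nat.sInf_le hbB
              have hflt : f j (aP j) < f i (aP i) := by
                have h1 : f j (aP j) ≤ f j b := lab_mono (hf j) haPb hbl
                have h2 : f j b < f i (aP i) := by
                  have := hstep.2
                  rw [hbe] at this
                  exact this
                omega
              have hcjlt : c j < c i := hclt j i hBj hBi hflt
              have hbj : Boards Pg s j (teAt (paths j) (g j) d (aP j)) :=
                ih j hBj (by omega)
              have hbj' : Boards Pg s j (teAt (paths j) (g j) d b) :=
                boards_extend hpaths hgmono haPb hbl hbj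
              refine boards_snoc hbj' (teAt_mem _ _ _ hai) ?_ ?_
              · show ((paths j).getD b d).2 = ((paths i).getD (aP i) d).1
                have := hstep.1
                rw [hbe] at this
                exact this
              · exact htlt j i hBj hBi hflt b hbl
      exact fun i h => H (c i + 1) i h (Nat.lt_succ_self _)
    -- reachability transfer
    have hsub : {w | Reaches Pf s w} ⊆ {w | Reaches Pg s w} := by
      intro w hw
      rcases hw with rfl | ⟨p, hne, ⟨hmem, hch⟩, hhd, hlast⟩
      · exact Or.inl rfl
      · obtain ⟨x, hx⟩ : ∃ x, p.getLast? = some x := ⟨p.getLast hne, List.getLast?_eq_getLast hne⟩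
        have hxd : x.2.dst = w := by
          rw [hx] at hlast; simpa using hlast
        have hxPf : x.2 ∈ Pf x.1 := hmem x (List.mem_of_mem_getLast? hx)
        obtain ⟨a, hal, hae⟩ := mem_mkTemporal d hxPf
        have hBa : Boards Pf s x.1 (teAt (paths x.1) (f x.1) d a) := by
          refine ⟨p, ⟨hmem, hch⟩, hhd, ?_⟩
          rw [hx, ← hae]
        have hBdx : Bd x.1 := ⟨a, hal, hBa⟩
        have haPa : aP x.1 ≤ a := Nat.sInf_le ⟨hal, hBa⟩
        have hbg : Boards Pg s x.1 (teAt (paths x.1) (g x.1) d a) :=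
          boards_extend hpaths hgmono haPa hal (main x.1 hBdx)
        have := boards_reaches hbg
        have hdst : (teAt (paths x.1) (g x.1) d a).dst = w := by
          rw [← hxd, hae]; rfl
        rw [hdst] at this
        exact this
    have hcard : {w | Reaches Pf s w}.ncard ≤ {w | Reaches Pg s w}.ncard :=
      Set.ncard_le_ncard hsub (Set.toFinite _)
    refine le_trans hcard (le_csSup hBddB ⟨t, rfl⟩)
  · exact csSup_le ⟨_, ⟨fun _ => 0, rfl⟩⟩ fun m hm => le_csSup hBddA (hBA hm)
end

section
/- Let 𝒫 be a collection of k static directed paths with a vertex s on a distinguished path P_s, and let 𝒱 be a set of switches satisfying the label-free switch-vertex-set conditions (i)–(iv). Then there exists a labeling λ of the edges of the paths, strictly increasing along each path, such that every switch of 𝒱 is temporal in the temporal k-path graph (⊎𝒫, λ). -/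
/-- The list of vertices visited by a static directed path (list of arcs). -/
def staticVerts {V : Type} (p : List (V × V)) : List V :=
  p.map Prod.fst ++ (p.getLast?.map Prod.snd).toList

/-- `v` occurs on the static path `p` at or before `w`. -/
def le_onStatic {V : Type} (p : List (V × V)) (v w : V) : Prop :=
  ∃ m n : ℕ, m ≤ n ∧ (staticVerts p)[m]? = some v ∧ (staticVerts p)[n]? = some w

/-- `v` occurs on the static path `p` strictly before `w`. -/
def lt_onStatic {V : Type} (p : List (V × V)) (v w : V) : Prop :=
  ∃ m n : ℕ, m < n ∧ (staticVerts p)[m]? = some v ∧ (staticVerts p)[n]? = some w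

/-- The edge relation of the switch tree `T_𝒱` on the path indices. -/
def svsEdgeS {V : Type} {k : ℕ} (𝒱 : Set (V × Fin k × Fin k)) (a b : Fin k) : Prop :=
  ∃ v, (v, a, b) ∈ 𝒱

/-- The label-free switch-vertex-set conditions (i)–(iv) for a collection of
static directed paths with source path index `sIdx`. -/
structure IsStaticSVS {V : Type} {k : ℕ} (paths : Fin k → List (V × V)) (sIdx : Fin k)
    (𝒱 : Set (V × Fin k × Fin k)) : Prop where
  switch_exists : ∀ ⦃v : V⦄ ⦃a b : Fin k⦄, (v, a, b) ∈ 𝒱 →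
    (∃ e ∈ paths a, e.2 = v) ∧ ∃ e ∈ paths b, e.1 = v
  unique_onto : ∀ ⦃v v' : V⦄ ⦃a a' b : Fin k⦄,
    (v, a, b) ∈ 𝒱 → (v', a', b) ∈ 𝒱 → v = v' ∧ a = a'
  no_onto_source : ∀ ⦃v : V⦄ ⦃a : Fin k⦄, (v, a, sIdx) ∉ 𝒱
  onto_before_off : ∀ ⦃v : V⦄ ⦃a b : Fin k⦄, (v, a, b) ∈ 𝒱 →
    ∀ ⦃v' : V⦄ ⦃c : Fin k⦄, (v', b, c) ∈ 𝒱 → lt_onStatic (paths b) v v'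
  tree : ∀ ⦃v : V⦄ ⦃a b : Fin k⦄, (v, a, b) ∈ 𝒱 →
    Relation.ReflTransGen (svsEdgeS 𝒱) sIdx a


/-- Given a collection of `k` static directed paths with a
vertex `s` on the distinguished path `paths sIdx`, and a set `𝒱` of switches
satisfying the label-free switch-vertex-set conditions (i)–(iv), there is a
labeling of the edges of the paths, strictly increasing along each path, that
makes every switch of `𝒱` temporal: the (label of the) edge of `paths a`
entering the switch vertex is smaller than that of the edge of `paths b`
leaving it. -/
theorem stmt9 {V : Type} {k : ℕ} (paths : Fin k → List (V × V))
    (hpaths : ∀ i, (paths i).Chain' (fun e f => e.2 = f.1))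
    (sIdx : Fin k) (s : V) (hs : s ∈ staticVerts (paths sIdx))
    (𝒱 : Set (V × Fin k × Fin k)) (hSVS : IsStaticSVS paths sIdx 𝒱) :
    ∃ ℓ : Fin k → ℕ → ℤ,
      (∀ i n, n + 1 < (paths i).length → ℓ i n < ℓ i (n + 1)) ∧
      ∀ v a b, (v, a, b) ∈ 𝒱 →
        ∀ n e, (paths a)[n]? = some e → e.2 = v →
        ∀ m f, (paths b)[m]? = some f → f.1 = v → ℓ a n < ℓ b m := by

  classical
  set E := svsEdgeS 𝒱 with hE
  -- acyclicity of the switch tree on nodes reachable from sIdx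
  have hacyc : ∀ x, Relation.ReflTransGen E sIdx x → ¬ Relation.TransGen E x x := by
    intro x hx
    induction hx with
    | refl =>
      intro h
      obtain ⟨q, -, hq⟩ := Relation.TransGen.tail'_iff.mp h
      obtain ⟨w, hw⟩ := hq
      exact hSVS.no_onto_source hw
    | @tail p x hpath hedge ih =>
      intro h
      obtain ⟨q, hxq, hqx⟩ := Relation.TransGen.tail'_iff.mp h
      obtain ⟨w, hw⟩ := hqx
      obtain ⟨v, hv⟩ := hedge
      obtain ⟨-, rfl⟩ := hSVS.unique_onto hw hv
      exact ih (Relation.TransGen.head' ⟨v, hv⟩ hxq)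
  -- depth-like measure: number of ancestors
  let d : Fin k → ℕ := fun i => (Finset.univ.filter (fun j => Relation.ReflTransGen E j i)).card
  have hd : ∀ a b, E a b → Relation.ReflTransGen E sIdx a → d a < d b := by
    intro a b hab hsa
    apply Finset.card_lt_card
    rw [Finset.ssubset_iff_of_subset]
    · refine ⟨b, ?_, ?_⟩
      · simp [Relation.ReflTransGen.refl]
      · simp only [Finset.mem_filter, Finset.mem_univ, true_and]
        intro hba
        exact hacyc b (hsa.tail hab) (Relation.TransGen.tail' hba hab)
    · intro j hj
      simp only [Finset.mem_filter, Finset.mem_univ, true_and] at hj ⊢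
      exact hj.tail hab
  set L : ℕ := Finset.univ.sup (fun i => (paths i).length) with hL
  set C : ℤ := (L : ℤ) + 1 with hC
  have hCpos : 0 < C := by positivity
  refine ⟨fun i n => C * d i + n, ?_, ?_⟩
  · intro i n _
    have : (n : ℤ) < (n : ℤ) + 1 := by linarith
    push_cast
    linarith
  · intro v a b hv n e hn he m f hm hf
    have hab : E a b := ⟨v, hv⟩
    have hda : d a < d b := hd a b hab (hSVS.tree hv)
    have hnlen : n < (paths a).length := by
      have := List.getElem?_eq_some_iff.mp hn
      exact this.1
    have hlenL : (paths a).length ≤ L := hL ▸ Finset.le_sup (f := fun i => (paths i).length) (Finset.mem_univ a)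
    have hnC : (n : ℤ) < C := by
      rw [hC]
      have : (n : ℤ) < (L : ℤ) := by exact_mod_cast lt_of_lt_of_le hnlen hlenL
      linarith
    have hdab : (d a : ℤ) + 1 ≤ (d b : ℤ) := by exact_mod_cast hda
    have hmnn : (0 : ℤ) ≤ (m : ℤ) := by positivity
    calc C * d a + (n : ℤ) < C * d a + C := by linarith
      _ = C * ((d a : ℤ) + 1) := by ring
      _ ≤ C * d b := by nlinarith
      _ ≤ C * d b + (m : ℤ) := by linarith
end

section
/- Let P be a temporal path with temporal edges (e_1, t_1), …, (e_m, t_m), let 1 ≤ j < i ≤ m and let δ < 0. After applying the shifting operation ((e_i, t_i), δ) to P, the label of e_j equals t_j − max(0, |δ| − σ), where σ = t_i − t_j − (i − j) is the cumulative slack between e_j and e_i on P; in particular, the label of e_j decreases by at most |δ|. -/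
/-- Apply a shifting operation of amount `δ` to the edge at position `pos` of the
base-path `p`: the edge itself is shifted by `δ`, and the shift propagates
forwards via `max` and backwards via `min`. -/
def shiftPath {V : Type} (p : List (TEdge V)) (pos : ℕ) (δ : ℤ) : List (TEdge V) :=
  match p[pos]? with
  | none => p
  | some e₀ =>
      p.mapIdx fun n e =>
        if n < pos then { e with lab := min e.lab (e₀.lab + δ - ((pos : ℤ) - (n : ℤ))) }
        else if n = pos then { e with lab := e₀.lab + δ }
        else { e with lab := max e.lab (e₀.lab + δ + ((n : ℤ) - (pos : ℤ))) }

/-- A shifting operation on a temporal `k`-path graph: it shifts the edge at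
position `pos` of base-path `idx` by `δ` (a delay if `δ > 0`, an advance if
`δ < 0`). -/
structure ShiftOp (k : ℕ) where
  idx : Fin k
  pos : ℕ
  δ : ℤ

/-- Apply a single shifting operation to a `k`-path graph. -/
def applyOp {V : Type} {k : ℕ} (P : Fin k → List (TEdge V)) (op : ShiftOp k) :
    Fin k → List (TEdge V) :=
  Function.update P op.idx (shiftPath (P op.idx) op.pos op.δ)

/-- Apply a sequence of shifting operations, in order. -/
def applyOps {V : Type} {k : ℕ} (P : Fin k → List (TEdge V)) (l : List (ShiftOp k)) :
    Fin k → List (TEdge V) :=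
  l.foldl applyOp P

/-- The cost of a sequence of shifting operations: the sum of the absolute values
of the individual shifts. -/
def opsCost {k : ℕ} (l : List (ShiftOp k)) : ℕ :=
  (l.map fun op => op.δ.natAbs).sum

lemma lab_mono_s11 {V : Type} {p : List (TEdge V)} (hp : IsTemporalPath p) :
    ∀ (i j : ℕ), j ≤ i → ∀ ei ej, p[i]? = some ei → p[j]? = some ej →
      ej.lab + ((i : ℤ) - (j : ℤ)) ≤ ei.lab := by
  intro i
  induction i with
  | zero =>
    intro j hj ei ej hi hj'
    interval_cases j
    rw [hi] at hj'
    simp_all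
  | succ n ih =>
    intro j hj ei ej hi hj'
    rcases Nat.lt_or_ge j (n + 1) with h | h
    · have hn1 : n + 1 < p.length := by
        by_contra hc
        rw [List.getElem?_eq_none (by omega)] at hi
        simp at hi
      have hn : n < p.length := by omega
      set en := p[n]
      have hen : p[n]? = some en := List.getElem?_eq_getElem hn
      have h1 : ej.lab + ((n : ℤ) - (j : ℤ)) ≤ en.lab := ih j (by omega) en ej hen hj'
      have h2 : en.lab < ei.lab := by
        have := List.isChain_iff_getElem.mp hp n (by omega)
        have hi' : p[n+1]? = some (p.get ⟨n+1, hn1⟩) := by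
          simp [List.getElem?_eq_getElem hn1]
        have hei' : ei = p[n+1] := by
          rw [List.getElem?_eq_getElem hn1] at hi
          exact (Option.some_inj.mp hi).symm
        obtain ⟨-, h⟩ := this
        rw [hei']
        simpa [en] using h
      push_cast
      omega
    · have : j = n + 1 := by omega
      subst this
      rw [hi] at hj'
      simp_all

/-- Advancing the edge at position `i` of a temporal path `p`
by `δ < 0` changes the label of the edge at an earlier position `j` to
`t_j - max 0 (|δ| - σ)`, where `σ = t_i - t_j - (i - j)` is the cumulative slack
between the two edges; in particular the label of `e_j` decreases by at most
`|δ|`. -/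
theorem stmt11 {V : Type} (p : List (TEdge V)) (hp : IsTemporalPath p)
    (i j : ℕ) (hji : j < i) (δ : ℤ) (hδ : δ < 0)
    (ei ej : TEdge V) (hei : p[i]? = some ei) (hej : p[j]? = some ej) :
    (shiftPath p i δ)[j]? =
      some { ej with
        lab := ej.lab - max 0 (|δ| - (ei.lab - ej.lab - ((i : ℤ) - (j : ℤ)))) } ∧
    max 0 (|δ| - (ei.lab - ej.lab - ((i : ℤ) - (j : ℤ)))) ≤ |δ| := by
  have hσ : ej.lab + ((i : ℤ) - (j : ℤ)) ≤ ei.lab :=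
    lab_mono_s11 hp i j (le_of_lt hji) ei ej hei hej
  have habs : |δ| = -δ := abs_of_neg hδ
  constructor
  · unfold shiftPath
    rw [hei]
    simp only [List.getElem?_mapIdx, hej, Option.map_some, hji, if_pos]
    congr 1
    have : min ej.lab (ei.lab + δ - ((i : ℤ) - (j : ℤ)))
        = ej.lab - max 0 (|δ| - (ei.lab - ej.lab - ((i : ℤ) - (j : ℤ)))) := by
      rw [habs]; omega
    rw [this]
  · rw [habs]; omega
end

section
/- Let P be a temporal path, i.e., its labels t_1 < t_2 < … < t_m are strictly increasing along P. After applying any single shifting operation ((e_i, t_i), δ) with δ ∈ ℤ to P, the resulting labels along P are again strictly increasing; consequently, applying any sequence of shifting operations to a temporal k-path graph yields again a temporal k-path graph. -/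
theorem shiftPath_preserves {V : Type} (p : List (TEdge V)) (hp : IsTemporalPath p)
    (pos : ℕ) (δ : ℤ) : IsTemporalPath (shiftPath p pos δ) := by
  unfold shiftPath
  cases h : p[pos]? with
  | none => exact hp
  | some e₀ =>
    rw [IsTemporalPath, List.Chain', List.isChain_iff_getElem] at hp ⊢
    intro i hi
    simp only [List.length_mapIdx] at hi
    obtain ⟨hd, hl⟩ := hp i hi
    simp only [List.get_eq_getElem, List.getElem_mapIdx] at *
    constructor
    · split_ifs <;> exact hd
    · split_ifs <;> simp_all <;> omega

theorem applyOps_preserves {V : Type} {k : ℕ} (S : List (ShiftOp k)) :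
    ∀ (P : Fin k → List (TEdge V)), (∀ i, IsTemporalPath (P i)) →
    ∀ i, IsTemporalPath (applyOps P S i) := by
  induction S with
  | nil => intro P hP i; exact hP i
  | cons op S ih =>
    intro P hP i
    refine ih _ (fun j => ?_) i
    unfold applyOp
    rcases eq_or_ne j op.idx with rfl | hne
    · rw [Function.update_self]
      exact shiftPath_preserves _ (hP _) _ _
    · rw [Function.update_of_ne hne]; exact hP j

/-- Applying a single shifting operation to a temporal path
yields again a temporal path (strictly increasing labels); consequently,
applying any sequence of shifting operations to a temporal `k`-path graph yields
again a temporal `k`-path graph. -/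
theorem stmt12 {V : Type} {k : ℕ} (p : List (TEdge V)) (hp : IsTemporalPath p)
    (pos : ℕ) (δ : ℤ)
    (P : Fin k → List (TEdge V)) (hP : ∀ i, IsTemporalPath (P i))
    (S : List (ShiftOp k)) :
    IsTemporalPath (shiftPath p pos δ) ∧
    ∀ i : Fin k, IsTemporalPath (applyOps P S i) := by
  exact ⟨shiftPath_preserves p hp pos δ, applyOps_preserves S P hP⟩
end

section
/- Let P and Q be temporal paths in a temporal graph, and let x and y be vertices lying on both P and Q such that P has edges e_P^−(x), e_P^−(y) entering x and y respectively, and Q has edges e_Q^+(x), e_Q^+(y) leaving x and y respectively. If λ(e_Q^+(x)) − λ(e_P^−(x)) = λ(e_Q^+(y)) − λ(e_P^−(y)), then x occurs at or before y on P if and only if x occurs at or before y on Q. -/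
lemma lab_lt {V : Type} {p : List (TEdge V)} (hp : IsTemporalPath p)
    {i j : ℕ} (hij : i < j) {e f : TEdge V}
    (he : p[i]? = some e) (hf : p[j]? = some f) : e.lab < f.lab := by
  have hj : j < p.length := by
    by_contra h
    simp [List.getElem?_eq_none (le_of_not_gt h)] at hf
  have hi : i < p.length := lt_trans hij hj
  rw [List.getElem?_eq_getElem hi] at he
  rw [List.getElem?_eq_getElem hj] at hf
  have hpw : (p.map TEdge.lab).Pairwise (· < ·) := by
    refine List.isChain_iff_pairwise.mp ?_
    rw [List.isChain_map]
    exact List.IsChain.imp (fun a b h => h.2) hp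
  rw [List.pairwise_iff_getElem] at hpw
  have := hpw i j (by simpa using hi) (by simpa using hj) hij
  simp only [List.getElem_map] at this
  rw [Option.some_inj.mp he, Option.some_inj.mp hf] at this
  exact this

/-- Let `P` and `Q` be temporal paths, `x`, `y` vertices lying
on both, with `ex`, `ey` the edges of `P` entering `x`, `y` (at positions `mx`,
`my`) and `fx`, `fy` the edges of `Q` leaving `x`, `y` (at positions `nx`, `ny`).
If the label differences agree, `λ(fx) - λ(ex) = λ(fy) - λ(ey)`, then `x` occurs
at or before `y` on `P` iff `x` occurs at or before `y` on `Q`. -/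
theorem stmt13 {V : Type} (P Q : List (TEdge V))
    (hP : IsTemporalPath P) (hQ : IsTemporalPath Q)
    (x y : V) (mx my nx ny : ℕ) (ex ey fx fy : TEdge V)
    (hex : P[mx]? = some ex) (hey : P[my]? = some ey)
    (hfx : Q[nx]? = some fx) (hfy : Q[ny]? = some fy)
    (hexd : ex.dst = x) (heyd : ey.dst = y)
    (hfxs : fx.src = x) (hfys : fy.src = y)
    (hlab : fx.lab - ex.lab = fy.lab - ey.lab) :
    mx ≤ my ↔ nx ≤ ny := by
  constructor
  · intro h
    by_contra hn
    push_neg at hn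
    have h2 : fy.lab < fx.lab := lab_lt hQ hn hfy hfx
    rcases lt_or_eq_of_le h with h1 | h1
    · have := lab_lt hP h1 hex hey
      omega
    · subst h1
      rw [hex] at hey
      have : ex = ey := Option.some_inj.mp hey
      subst this
      omega
  · intro h
    by_contra hn
    push_neg at hn
    have h2 : ey.lab < ex.lab := lab_lt hP hn hey hex
    rcases lt_or_eq_of_le h with h1 | h1
    · have := lab_lt hQ h1 hfx hfy
      omega
    · subst h1
      rw [hfx] at hfy
      have : fx = fy := Option.some_inj.mp hfy
      subst this
      omega
end

section
/- Let 𝒢 = ⊎𝒫 be a temporal k-path graph with source s on base-path P_s, and let T be a switch-path-tree such that at least one switch-vertex-set 𝒱' with T_{𝒱'} = T exists. Define the greedy switch-vertex-set 𝒱 by processing the edges of T from the root outward and, for each tree edge (P_from, P_to), choosing as switchonto_𝒱(P_to) the earliest vertex v on P_to such that P_from contains an edge entering v that lies on the suffix P_from[switchonto_𝒱(P_from):] (with the convention switchonto_𝒱(P_s) = s). Then 𝒱 is well defined, T_𝒱 = T, and for every switch-vertex-set 𝒱' with T_{𝒱'} = T and every base-path P ≠ P_s appearing in T, switchonto_𝒱(P)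 ≤_P switchonto_{𝒱'}(P); consequently the suffix P[switchonto_{𝒱'}(P):] is contained in the suffix P[switchonto_𝒱(P):]. -/
section Greedy

attribute [local instance] Classical.propDecidable

variable {V : Type} {k : ℕ}

lemma exists_idx_of_src {p : List (TEdge V)} {v : V} (h : ∃ e ∈ p, e.src = v) :
    ∃ n : ℕ, (verts p)[n]? = some v := by
  obtain ⟨e, he, rfl⟩ := h
  have : e.src ∈ verts p :=
    List.mem_append_left _ (List.mem_map_of_mem (f := TEdge.src) he)
  exact List.mem_iff_getElem?.1 this

lemma idx_unique {p : List (TEdge V)} (nd : (verts p).Nodup) {i j : ℕ} {x : V}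
    (hi : (verts p)[i]? = some x) (hj : (verts p)[j]? = some x) : i = j := by
  have h1 : i < (verts p).length := (List.getElem?_eq_some_iff.1 hi).1
  exact (List.getElem?_inj h1 nd).1 (hi.trans hj.symm)

lemma le_on_trans_lt {p : List (TEdge V)} (nd : (verts p).Nodup) {u v w : V}
    (h1 : le_on p u v) (h2 : lt_on p v w) : lt_on p u w := by
  obtain ⟨m, n, hmn, hm, hn⟩ := h1
  obtain ⟨m', n', hmn', hm', hn'⟩ := h2
  have : n = m' := idx_unique nd hn hm'
  exact ⟨m, n', lt_of_le_of_lt (this ▸ hmn) hmn', hm, hn'⟩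

lemma le_on_trans_le {p : List (TEdge V)} (nd : (verts p).Nodup) {u v w : V}
    (h1 : le_on p u v) (h2 : le_on p v w) : le_on p u w := by
  obtain ⟨m, n, hmn, hm, hn⟩ := h1
  obtain ⟨m', n', hmn', hm', hn'⟩ := h2
  have : n = m' := idx_unique nd hn hm'
  exact ⟨m, n', le_trans (this ▸ hmn) hmn', hm, hn'⟩

/-- Candidate switch vertices onto `b` from `a`, given that the switch onto `a`
(if `a` is not the source path) is at `w`. -/
def cand (P : Fin k → List (TEdge V)) (sIdx a b : Fin k) (w v : V) : Prop :=
  (∃ e ∈ P a, e.dst = v) ∧ (∃ e ∈ P b, e.src = v) ∧ (a = sIdx ∨ lt_on (P a) w v)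

/-- The earliest candidate on `P b`, if any. -/
noncomputable def pick (P : Fin k → List (TEdge V)) (sIdx a b : Fin k) (w : V) :
    Option V :=
  if h : ∃ n : ℕ, ∃ v, (verts (P b))[n]? = some v ∧ cand P sIdx a b w v then
    (verts (P b))[Nat.find h]?
  else none

lemma pick_spec {P : Fin k → List (TEdge V)} {sIdx a b : Fin k} {w v : V}
    (h : pick P sIdx a b w = some v) :
    cand P sIdx a b w v ∧ ∃ n : ℕ, (verts (P b))[n]? = some v ∧
      ∀ m u, (verts (P b))[m]? = some u → cand P sIdx a b w u → n ≤ m := by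
  unfold pick at h
  split_ifs at h with hex
  · obtain ⟨u, hu, hcand⟩ := Nat.find_spec hex
    have huv : u = v := by rw [hu] at h; exact Option.some.inj h
    subst huv
    exact ⟨hcand, Nat.find hex, hu, fun m u' hm hc => Nat.find_le ⟨u', hm, hc⟩⟩

lemma pick_isSome {P : Fin k → List (TEdge V)} {sIdx a b : Fin k} {w v : V} {n : ℕ}
    (hocc : (verts (P b))[n]? = some v) (hc : cand P sIdx a b w v) :
    ∃ u, pick P sIdx a b w = some u := by
  have hex : ∃ n : ℕ, ∃ v, (verts (P b))[n]? = some v ∧ cand P sIdx a b w v :=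
    ⟨n, v, hocc, hc⟩
  obtain ⟨u, hu, _⟩ := Nat.find_spec hex
  exact ⟨u, by rw [pick, dif_pos hex]; exact hu⟩

/-- Iterative construction of the greedy switch vertices: after `n` rounds,
`F … n b` is the greedy switch vertex onto `b` if it has been determined. -/
noncomputable def F (P : Fin k → List (TEdge V)) (sIdx : Fin k) (s : V)
    (T : Set (Fin k × Fin k)) : ℕ → Fin k → Option V
  | 0, b => if b = sIdx then some s else none
  | n + 1, b =>
    if b = sIdx then some s
    else if h : ∃ a, (a, b) ∈ T then
      (F P sIdx s T n (Classical.choose h)).bind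
        (fun w => pick P sIdx (Classical.choose h) b w)
    else none

variable {P : Fin k → List (TEdge V)} {sIdx : Fin k} {s : V} {T : Set (Fin k × Fin k)}

lemma F_sIdx (n : ℕ) : F P sIdx s T n sIdx = some s := by
  cases n <;> simp [F]

lemma F_mono : ∀ {n : ℕ} {b : Fin k} {v : V},
    F P sIdx s T n b = some v → F P sIdx s T (n + 1) b = some v := by
  intro n
  induction n with
  | zero =>
    intro b v hF
    by_cases hb : b = sIdx
    · subst hb
      rw [F, if_pos rfl] at hF
      rw [← hF]; exact F_sIdx 1
    · rw [F, if_neg hb] at hF; exact absurd hF (by simp)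
  | succ n ih =>
    intro b v hF
    by_cases hb : b = sIdx
    · subst hb
      rw [F_sIdx] at hF
      rw [← hF]; exact F_sIdx (n + 2)
    · rw [F, if_neg hb] at hF
      split_ifs at hF with hex
      · obtain ⟨w, hFw, hpick⟩ := Option.bind_eq_some_iff.1 hF
        rw [F, if_neg hb, dif_pos hex, ih hFw, Option.bind_some]
        exact hpick

lemma F_le {n m : ℕ} (hnm : n ≤ m) {b : Fin k} {v : V}
    (hF : F P sIdx s T n b = some v) : F P sIdx s T m b = some v := by
  induction hnm with
  | refl => exact hF
  | step _ ih => exact F_mono ih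

lemma F_val_unique {n m : ℕ} {b : Fin k} {v v' : V}
    (hF : F P sIdx s T n b = some v) (hF' : F P sIdx s T m b = some v') : v = v' := by
  rcases le_total n m with h | h
  · have := F_le h hF
    rw [this] at hF'; exact Option.some.inj hF'
  · have := F_le h hF'
    rw [this] at hF; exact (Option.some.inj hF).symm

lemma F_inv {n : ℕ} {b : Fin k} {v : V} (hb : b ≠ sIdx)
    (hF : F P sIdx s T n b = some v) :
    ∃ (a : Fin k) (m : ℕ) (w : V), (a, b) ∈ T ∧ F P sIdx s T m a = some w ∧
      pick P sIdx a b w = some v := by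
  cases n with
  | zero => rw [F, if_neg hb] at hF; exact absurd hF (by simp)
  | succ n =>
    rw [F, if_neg hb] at hF
    split_ifs at hF with hex
    · obtain ⟨w, hFw, hpick⟩ := Option.bind_eq_some_iff.1 hF
      exact ⟨Classical.choose hex, n, w, Classical.choose_spec hex, hFw, hpick⟩

/-- Minimality: any value produced by `F` is `le_on`-below the corresponding
switch vertex of any SVS realizing `T`. -/
lemma F_min (hnd : ∀ i, (verts (P i)).Nodup)
    (huniq : ∀ ⦃a a' b : Fin k⦄, (a, b) ∈ T → (a', b) ∈ T → a = a')
    (𝒱' : Set (V × Fin k × Fin k)) (h' : IsSVS P sIdx 𝒱')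
    (hiff' : ∀ a b : Fin k, svsEdge 𝒱' a b ↔ (a, b) ∈ T) :
    ∀ (n : ℕ) (b : Fin k) (v : V), F P sIdx s T n b = some v →
      ∀ (v' : V) (a' : Fin k), (v', a', b) ∈ 𝒱' → le_on (P b) v v' := by
  intro n
  induction n with
  | zero =>
    intro b v hF v' a' hm
    by_cases hb : b = sIdx
    · subst hb; exact (h'.no_onto_source hm).elim
    · rw [F, if_neg hb] at hF; exact absurd hF (by simp)
  | succ n ih =>
    intro b v hF v' a' hm
    by_cases hb : b = sIdx
    · subst hb; exact (h'.no_onto_source hm).elim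
    · rw [F, if_neg hb] at hF
      have hT' : (a', b) ∈ T := (hiff' a' b).1 ⟨v', hm⟩
      have hex : ∃ a, (a, b) ∈ T := ⟨a', hT'⟩
      rw [dif_pos hex] at hF
      have haT : (Classical.choose hex, b) ∈ T := Classical.choose_spec hex
      have haa' : Classical.choose hex = a' := huniq haT hT'
      rw [haa'] at hF
      obtain ⟨w, hFw, hpick⟩ := Option.bind_eq_some_iff.1 hF
      obtain ⟨hcv, n₀, hn₀, hmin⟩ := pick_spec hpick
      have hse := h'.switch_exists hm
      have hcand' : cand P sIdx a' b w v' := by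
        refine ⟨hse.1, hse.2, ?_⟩
        by_cases hs : a' = sIdx
        · exact Or.inl hs
        · right
          rcases Relation.ReflTransGen.cases_tail (h'.tree hm) with h1 | ⟨c, _, hc2⟩
          · exact absurd h1 hs
          · obtain ⟨u', hu'⟩ := hc2
            exact le_on_trans_lt (hnd a') (ih a' w hFw u' c hu')
              (h'.onto_before_off hu' hm)
      obtain ⟨m', hm'⟩ := exists_idx_of_src hse.2
      exact ⟨n₀, m', hmin m' v' hm' hcand', hn₀, hm'⟩

/-- Existence: `F` eventually produces a value on every `T`-reachable path. -/
lemma F_exists (hnd : ∀ i, (verts (P i)).Nodup)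
    (huniq : ∀ ⦃a a' b : Fin k⦄, (a, b) ∈ T → (a', b) ∈ T → a = a')
    (hnos : ∀ ⦃a : Fin k⦄, (a, sIdx) ∉ T)
    (𝒱₀ : Set (V × Fin k × Fin k)) (h₀ : IsSVS P sIdx 𝒱₀)
    (hiff₀ : ∀ a b : Fin k, svsEdge 𝒱₀ a b ↔ (a, b) ∈ T)
    {b : Fin k}
    (hreach : Relation.ReflTransGen (fun x y => (x, y) ∈ T) sIdx b) :
    ∃ (n : ℕ) (v : V), F P sIdx s T n b = some v := by
  induction hreach with
  | refl => exact ⟨0, s, F_sIdx 0⟩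
  | @tail c b _ hcb ih =>
    obtain ⟨n, w, hFw⟩ := ih
    have hb : b ≠ sIdx := fun h => hnos (h ▸ hcb)
    have hex : ∃ a, (a, b) ∈ T := ⟨c, hcb⟩
    have hc : Classical.choose hex = c := huniq (Classical.choose_spec hex) hcb
    obtain ⟨v₀, hv₀⟩ := (hiff₀ c b).2 hcb
    have hse := h₀.switch_exists hv₀
    have hcand : cand P sIdx c b w v₀ := by
      refine ⟨hse.1, hse.2, ?_⟩
      by_cases hs : c = sIdx
      · exact Or.inl hs
      · right
        rcases Relation.ReflTransGen.cases_tail (h₀.tree hv₀) with h1 | ⟨p, _, hp2⟩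
        · exact absurd h1 hs
        · obtain ⟨u₀, hu₀⟩ := hp2
          exact le_on_trans_lt (hnd c)
            (F_min hnd huniq 𝒱₀ h₀ hiff₀ n c w hFw u₀ p hu₀)
            (h₀.onto_before_off hu₀ hv₀)
    obtain ⟨m', hm'⟩ := exists_idx_of_src hse.2
    obtain ⟨u, hu⟩ := pick_isSome hm' hcand
    refine ⟨n + 1, u, ?_⟩
    rw [F, if_neg hb, dif_pos hex, hc, hFw, Option.bind_some]
    exact hu

end Greedy

/-- Let `⊎ P` be a temporal `k`-path graph whose source `s` is
the first vertex of the base-path `P sIdx`, and let `T` be a switch-path-tree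
realized by at least one switch-vertex-set. Then there is a (greedy)
switch-vertex-set `𝒱` realizing `T` that is pointwise earliest: for every
switch-vertex-set `𝒱'` realizing `T` and every switch `(v', a, b) ∈ 𝒱'`, the
corresponding switch vertex `v` of `𝒱` occurs on `P b` at or before `v'`;
consequently the suffix of `P b` from `v'` is contained in the suffix from `v`. -/
theorem stmt15 {V : Type} {k : ℕ} (P : Fin k → List (TEdge V))
    (hP : ∀ i, IsTemporalPath (P i)) (hnd : ∀ i, (verts (P i)).Nodup)
    (sIdx : Fin k) (s : V)
    (hfirst : (verts (P sIdx)).head? = some s)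
    (T : Set (Fin k × Fin k))
    (hT : ∃ 𝒱₀ : Set (V × Fin k × Fin k), IsSVS P sIdx 𝒱₀ ∧
      ∀ a b : Fin k, svsEdge 𝒱₀ a b ↔ (a, b) ∈ T) :
    ∃ 𝒱 : Set (V × Fin k × Fin k), IsSVS P sIdx 𝒱 ∧
      (∀ a b : Fin k, svsEdge 𝒱 a b ↔ (a, b) ∈ T) ∧
      ∀ 𝒱' : Set (V × Fin k × Fin k), IsSVS P sIdx 𝒱' →
        (∀ a b : Fin k, svsEdge 𝒱' a b ↔ (a, b) ∈ T) →
        ∀ ⦃v v' : V⦄ ⦃a b : Fin k⦄, (v, a, b) ∈ 𝒱 → (v', a, b) ∈ 𝒱' →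
          le_on (P b) v v' ∧ ∀ w, le_on (P b) v' w → le_on (P b) v w := by
  obtain ⟨𝒱₀, h₀, hiff₀⟩ := hT
  have huniq : ∀ ⦃a a' b : Fin k⦄, (a, b) ∈ T → (a', b) ∈ T → a = a' := by
    intro a a' b h1 h2
    obtain ⟨v, hv⟩ := (hiff₀ a b).2 h1
    obtain ⟨v', hv'⟩ := (hiff₀ a' b).2 h2
    exact (h₀.unique_onto hv hv').2
  have hnos : ∀ ⦃a : Fin k⦄, (a, sIdx) ∉ T := by
    intro a h
    obtain ⟨v, hv⟩ := (hiff₀ a sIdx).2 h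
    exact h₀.no_onto_source hv
  have hreachT : ∀ ⦃a b : Fin k⦄, (a, b) ∈ T →
      Relation.ReflTransGen (fun x y => (x, y) ∈ T) sIdx a := by
    intro a b h
    obtain ⟨v, hv⟩ := (hiff₀ a b).2 h
    exact Relation.ReflTransGen.mono (fun x y hxy => (hiff₀ x y).1 hxy) _ _ (h₀.tree hv)
  refine ⟨{t | (t.2.1, t.2.2) ∈ T ∧ ∃ n, F P sIdx s T n t.2.2 = some t.1}, ?_, ?_, ?_⟩
  · constructor
    · -- switch_exists
      rintro v a b ⟨hTab, n, hF⟩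
      have hb : b ≠ sIdx := fun h => hnos (h ▸ hTab)
      obtain ⟨a', m, w, hTa'b, _, hpick⟩ := F_inv hb hF
      rw [huniq hTa'b hTab] at hpick
      obtain ⟨hcand, _⟩ := pick_spec hpick
      exact ⟨hcand.1, hcand.2.1⟩
    · -- unique_onto
      rintro v v' a a' b ⟨hTab, n, hF⟩ ⟨hTa'b, m, hF'⟩
      exact ⟨F_val_unique hF hF', huniq hTab hTa'b⟩
    · -- no_onto_source
      rintro v a ⟨hTas, -⟩
      exact hnos hTas
    · -- onto_before_off
      rintro v a b ⟨hTab, n, hF⟩ v' c ⟨hTbc, m, hF'⟩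
      have hc : c ≠ sIdx := fun h => hnos (h ▸ hTbc)
      obtain ⟨b', m', w, hTb'c, hFw, hpick⟩ := F_inv hc hF'
      rw [huniq hTb'c hTbc] at hFw hpick
      obtain ⟨hcand, _⟩ := pick_spec hpick
      have hb : b ≠ sIdx := fun h => hnos (h ▸ hTab)
      rcases hcand.2.2 with h | h
      · exact absurd h hb
      · have : w = v := F_val_unique hFw hF
        exact this ▸ h
    · -- tree
      rintro v a b ⟨hTab, -⟩
      have hmain : ∀ x : Fin k,
          Relation.ReflTransGen (fun x y => (x, y) ∈ T) sIdx x →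
          Relation.ReflTransGen
            (svsEdge {t : V × Fin k × Fin k |
              (t.2.1, t.2.2) ∈ T ∧ ∃ n, F P sIdx s T n t.2.2 = some t.1}) sIdx x := by
        intro x hx
        induction hx with
        | refl => exact Relation.ReflTransGen.refl
        | @tail c x hrc hcx ih =>
          refine ih.tail ?_
          obtain ⟨n, u, hu⟩ := F_exists hnd huniq hnos 𝒱₀ h₀ hiff₀ (hrc.tail hcx)
          exact ⟨u, hcx, n, hu⟩
      exact hmain a (hreachT hTab)
  · -- realizes T
    intro a b
    constructor
    · rintro ⟨v, hTab, -⟩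
      exact hTab
    · intro hTab
      obtain ⟨n, u, hu⟩ := F_exists hnd huniq hnos 𝒱₀ h₀ hiff₀
        ((hreachT hTab).tail hTab)
      exact ⟨u, hTab, n, hu⟩
  · -- minimality
    rintro 𝒱' h' hiff' v v' a b ⟨hTab, n, hF⟩ hm'
    have h1 : le_on (P b) v v' := F_min hnd huniq 𝒱' h' hiff' n b v hF v' a hm'
    exact ⟨h1, fun w hw => le_on_trans_le (hnd b) h1 hw⟩
end

section
/- Applying a shifting operation ((e, t), δ) with δ > 0 to a temporal k-path graph yields the same final labeling as applying δ successive unit delaying operations to the edge e, each of the form ((e, t_cur), +1) where t_cur is the current label of e; analogously, ((e, t), δ) with δ < 0 yields the same final labeling as applying |δ| successive unit advancing operations ((e, t_cur), −1). Consequently, every temporal k-path graph obtainable from 𝒢 by a sequence of shifting operations of total cost at most b is obtainable from 𝒢 by a sequence of at most b shifting operations each of cost 1. -/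
lemma shiftPath_of_ge {V : Type} (p : List (TEdge V)) (pos : ℕ) (δ : ℤ)
    (h : p.length ≤ pos) : shiftPath p pos δ = p := by
  unfold shiftPath; rw [List.getElem?_eq_none h]

lemma shiftPath_eq {V : Type} (p : List (TEdge V)) (pos : ℕ) (δ : ℤ)
    (h : pos < p.length) : shiftPath p pos δ =
      p.mapIdx fun n e =>
        if n < pos then { e with lab := min e.lab (p[pos].lab + δ - ((pos : ℤ) - (n : ℤ))) }
        else if n = pos then { e with lab := p[pos].lab + δ }
        else { e with lab := max e.lab (p[pos].lab + δ + ((n : ℤ) - (pos : ℤ))) } := by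
  unfold shiftPath; rw [List.getElem?_eq_getElem h]

lemma shiftPath_length {V : Type} (p : List (TEdge V)) (pos : ℕ) (δ : ℤ) :
    (shiftPath p pos δ).length = p.length := by
  by_cases h : pos < p.length
  · rw [shiftPath_eq p pos δ h, List.length_mapIdx]
  · rw [shiftPath_of_ge p pos δ (le_of_not_gt h)]

lemma shiftPath_getElem {V : Type} (p : List (TEdge V)) (pos : ℕ) (δ : ℤ)
    (h : pos < p.length) (n : ℕ) (hn : n < (shiftPath p pos δ).length) :
    (shiftPath p pos δ)[n] =
      if n < pos then { p[n]'(by rwa [shiftPath_length] at hn) with lab := min (p[n]'(by rwa [shiftPath_length] at hn)).lab (p[pos].lab + δ - ((pos : ℤ) - (n : ℤ))) }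
      else if n = pos then { p[n]'(by rwa [shiftPath_length] at hn) with lab := p[pos].lab + δ }
      else { p[n]'(by rwa [shiftPath_length] at hn) with lab := max (p[n]'(by rwa [shiftPath_length] at hn)).lab (p[pos].lab + δ + ((n : ℤ) - (pos : ℤ))) } := by
  simp only [shiftPath_eq p pos δ h, List.getElem_mapIdx]

lemma gap {V : Type} {p : List (TEdge V)} (hp : IsTemporalPath p) {n m : ℕ}
    (h : n ≤ m) (hm : m < p.length) :
    (p[n]'(lt_of_le_of_lt h hm)).lab + ((m : ℤ) - (n : ℤ)) ≤ p[m].lab := by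
  induction m with
  | zero => interval_cases n; simp
  | succ m ih =>
    rcases Nat.lt_or_ge n (m+1) with h' | h'
    · have hm' : m < p.length := lt_trans (Nat.lt_succ_self m) hm
      have step := List.isChain_iff_getElem.mp hp m (by omega)
      have h2 := step.2
      have := ih (by omega) hm'
      push_cast at *; omega
    · have : n = m + 1 := by omega
      subst this; simp

lemma shiftPath_temporal {V : Type} {p : List (TEdge V)} (hp : IsTemporalPath p)
    (pos : ℕ) (δ : ℤ) : IsTemporalPath (shiftPath p pos δ) := by
  by_cases h : pos < p.length
  · rw [IsTemporalPath, List.Chain', List.isChain_iff_getElem]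
    intro i hi
    rw [shiftPath_length] at hi
    rw [shiftPath_getElem p pos δ h i (by rw [shiftPath_length]; omega),
      shiftPath_getElem p pos δ h (i+1) (by rw [shiftPath_length]; omega)]
    have step := List.isChain_iff_getElem.mp hp i (by omega)
    have h2 := step.2
    split_ifs <;> exact ⟨step.1, by dsimp only; omega⟩
  · rwa [shiftPath_of_ge p pos δ (le_of_not_gt h)]

lemma shiftPath_zero {V : Type} {p : List (TEdge V)} (hp : IsTemporalPath p)
    (pos : ℕ) : shiftPath p pos 0 = p := by
  by_cases h : pos < p.length
  · apply List.ext_getElem (shiftPath_length p pos 0)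
    intro n hn hn'
    rw [shiftPath_getElem p pos 0 h n hn]
    split_ifs with h1 h2
    · have := gap hp (le_of_lt h1) h
      have h' : min (p[n]'hn').lab (p[pos].lab + 0 - ((pos:ℤ) - (n:ℤ))) = (p[n]'hn').lab := by omega
      rw [h']
    · subst h2
      have h' : (p[n]'hn').lab + 0 = (p[n]'hn').lab := by omega
      rw [h']
    · have := gap hp (le_of_not_gt h1) hn'
      have h' : max (p[n]'hn').lab (p[pos].lab + 0 + ((n:ℤ) - (pos:ℤ))) = (p[n]'hn').lab := by omega
      rw [h']
  · exact shiftPath_of_ge p pos 0 (le_of_not_gt h)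

lemma shift_shift {V : Type} {p : List (TEdge V)} (hp : IsTemporalPath p)
    (pos : ℕ) (a b : ℤ) (hsign : 0 ≤ a ∧ 0 ≤ b ∨ a ≤ 0 ∧ b ≤ 0) :
    shiftPath (shiftPath p pos a) pos b = shiftPath p pos (a + b) := by
  by_cases h : pos < p.length
  · have hq : pos < (shiftPath p pos a).length := by rwa [shiftPath_length]
    have hqpos : ((shiftPath p pos a)[pos]'hq).lab = p[pos].lab + a := by
      rw [shiftPath_getElem p pos a h pos hq]
      simp
    apply List.ext_getElem (by simp [shiftPath_length])
    intro n hn hn'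
    rw [shiftPath_length, shiftPath_length] at hn
    rw [shiftPath_length] at hn'
    rw [shiftPath_getElem _ pos b hq n (by rwa [shiftPath_length, shiftPath_length]),
      shiftPath_getElem p pos (a+b) h n (by rwa [shiftPath_length]), hqpos,
      shiftPath_getElem p pos a h n (by rwa [shiftPath_length])]
    rcases lt_trichotomy n pos with h1 | h1 | h1
    · simp only [if_pos h1]
      have := gap hp (le_of_lt h1) h
      congr 1
      omega
    · simp only [if_neg (by omega : ¬ n < pos), if_pos h1]
      congr 1
      omega
    · have hg := gap hp (le_of_lt h1) hn'
      simp only [if_neg (by omega : ¬ n < pos), if_neg (by omega : ¬ n = pos)]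
      congr 1
      omega
  · rw [shiftPath_of_ge p pos a (le_of_not_gt h),
      shiftPath_of_ge p pos b (le_of_not_gt h),
      shiftPath_of_ge p pos (a+b) (le_of_not_gt h)]

lemma applyOps_append {V : Type} {k : ℕ} (P : Fin k → List (TEdge V))
    (l₁ l₂ : List (ShiftOp k)) :
    applyOps P (l₁ ++ l₂) = applyOps (applyOps P l₁) l₂ :=
  List.foldl_append

lemma applyOp_temporal {V : Type} {k : ℕ} {P : Fin k → List (TEdge V)}
    (hP : ∀ i, IsTemporalPath (P i)) (op : ShiftOp k) :
    ∀ i, IsTemporalPath (applyOp P op i) := by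
  intro i
  unfold applyOp
  by_cases h : i = op.idx
  · subst h; rw [Function.update_self]; exact shiftPath_temporal (hP _) _ _
  · rw [Function.update_of_ne h]; exact hP i

lemma unit_decomp {V : Type} {k : ℕ} (P : Fin k → List (TEdge V))
    (hP : ∀ i, IsTemporalPath (P i)) (i : Fin k) (pos : ℕ) (ε : ℤ)
    (hε : ε = 1 ∨ ε = -1) (n : ℕ) :
    applyOps P (List.replicate n ⟨i, pos, ε⟩) = applyOp P ⟨i, pos, (n : ℤ) * ε⟩ := by
  induction n with
  | zero =>
    show P = applyOp P ⟨i, pos, 0 * ε⟩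
    unfold applyOp
    rw [show (0 : ℤ) * ε = 0 by ring]
    rw [shiftPath_zero (hP i), Function.update_eq_self]
  | succ n ih =>
    rw [List.replicate_succ', applyOps_append, ih]
    show applyOp (applyOp P ⟨i, pos, (n : ℤ) * ε⟩) ⟨i, pos, ε⟩ = _
    unfold applyOp
    simp only [Function.update_self, Function.update_idem]
    rw [shift_shift (hP i) pos ((n : ℤ) * ε) ε
      (by rcases hε with h | h <;> subst h <;> [left; right] <;> constructor <;> omega)]
    push_cast; ring_nf

lemma cost_decomp {V : Type} {k : ℕ} (S : List (ShiftOp k)) :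
    ∀ (P : Fin k → List (TEdge V)), (∀ i, IsTemporalPath (P i)) →
    ∃ S' : List (ShiftOp k), (∀ op ∈ S', op.δ.natAbs = 1) ∧
      S'.length ≤ opsCost S ∧ applyOps P S' = applyOps P S := by
  induction S with
  | nil => intro P _; exact ⟨[], by simp, by simp [opsCost], rfl⟩
  | cons op S ih =>
    intro P hP
    obtain ⟨S₂, hS₂u, hS₂l, hS₂⟩ := ih (applyOp P op) (applyOp_temporal hP op)
    obtain ⟨i, pos, δ⟩ := op
    have hε : (1 : ℤ) = 1 ∨ (1 : ℤ) = -1 := Or.inl rfl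
    have hε' : (-1 : ℤ) = 1 ∨ (-1 : ℤ) = -1 := Or.inr rfl
    rcases lt_trichotomy δ 0 with hδ | hδ | hδ
    · refine ⟨List.replicate δ.natAbs ⟨i, pos, -1⟩ ++ S₂, ?_, ?_, ?_⟩
      · intro o ho
        rcases List.mem_append.mp ho with h | h
        · rw [List.eq_of_mem_replicate h]; rfl
        · exact hS₂u o h
      · simp only [List.length_append, List.length_replicate, opsCost, List.map_cons,
          List.sum_cons]
        exact Nat.add_le_add le_rfl hS₂l
      · rw [applyOps_append, unit_decomp P hP i pos (-1) hε' δ.natAbs,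
          show ((δ.natAbs : ℤ)) * (-1) = δ by omega]
        exact hS₂
    · subst hδ
      refine ⟨S₂, hS₂u, ?_, ?_⟩
      · simp only [opsCost, List.map_cons, List.sum_cons] at *
        omega
      · have h0 : applyOp P ⟨i, pos, 0⟩ = P := by
          unfold applyOp
          rw [shiftPath_zero (hP i), Function.update_eq_self]
        rw [h0] at hS₂
        rw [hS₂]
        show applyOps P S = applyOps (applyOp P ⟨i, pos, 0⟩) S
        rw [h0]
    · refine ⟨List.replicate δ.natAbs ⟨i, pos, 1⟩ ++ S₂, ?_, ?_, ?_⟩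
      · intro o ho
        rcases List.mem_append.mp ho with h | h
        · rw [List.eq_of_mem_replicate h]; rfl
        · exact hS₂u o h
      · simp only [List.length_append, List.length_replicate, opsCost, List.map_cons,
          List.sum_cons]
        exact Nat.add_le_add le_rfl hS₂l
      · rw [applyOps_append, unit_decomp P hP i pos 1 hε δ.natAbs,
          show ((δ.natAbs : ℤ)) * 1 = δ by omega]
        exact hS₂


/-- On a temporal `k`-path graph, a delaying operation of
amount `δ > 0` on the edge at position `pos` of base-path `i` has the same
effect as `δ` successive unit delaying operations on that edge, and an advancing
operation of amount `δ < 0` the same effect as `|δ|` successive unit advancing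
operations; consequently, every `k`-path graph obtainable by a sequence of
shifting operations of total cost at most `b` is obtainable by a sequence of at
most `b` shifting operations, each of cost `1`. -/
theorem stmt16 {V : Type} {k : ℕ} (P : Fin k → List (TEdge V))
    (hP : ∀ i, IsTemporalPath (P i)) :
    (∀ (i : Fin k) (pos : ℕ) (δ : ℤ), 0 < δ →
      applyOps P (List.replicate δ.toNat ⟨i, pos, 1⟩) = applyOp P ⟨i, pos, δ⟩) ∧
    (∀ (i : Fin k) (pos : ℕ) (δ : ℤ), δ < 0 →
      applyOps P (List.replicate (-δ).toNat ⟨i, pos, -1⟩) = applyOp P ⟨i, pos, δ⟩) ∧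
    (∀ (b : ℕ) (S : List (ShiftOp k)), opsCost S ≤ b →
      ∃ S' : List (ShiftOp k), (∀ op ∈ S', op.δ.natAbs = 1) ∧ S'.length ≤ b ∧
        applyOps P S' = applyOps P S) := by
  refine ⟨?_, ?_, ?_⟩
  · intro i pos δ hδ
    rw [unit_decomp P hP i pos 1 (Or.inl rfl) δ.toNat,
      show ((δ.toNat : ℤ)) * 1 = δ by omega]
  · intro i pos δ hδ
    rw [unit_decomp P hP i pos (-1) (Or.inr rfl) (-δ).toNat,
      show (((-δ).toNat : ℤ)) * (-1) = δ by omega]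
  · intro b S h
    obtain ⟨S', hu, hl, he⟩ := cost_decomp S P hP
    exact ⟨S', hu, le_trans hl h, he⟩
end
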